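/- arXiv:1106.5010 — 2 statements merged into one kernel-verified Lean document; each statement's English description precedes it below -/
import Mathlib

section
/- In a J-category, the definition of Wsecat(p) for a morphism p : E → B via an F-factorization B →τ F ↠ 0 of the zero morphism does not depend on the choice of F-factorization: if B →τ F ↠ 0 and B →τ' F' ↠ 0 are two F-factorizations, then Wsecat(τ∘p) = Wsecat(τ'∘p). -/
open CategoryTheory CategoryTheory.Limits ZeroObject

universe v u v' u'

variable (C : Type u) [Category.{v} C] [HasZeroObject C] [HasZeroMorphisms C]

/-- A category satisfying axioms (J1)-(J4) of Doeraene's J-categories: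
a pointed category with fibrations, cofibrations and weak equivalences. -/
structure PreJCat where
  fib : MorphismProperty C
  cofib : MorphismProperty C
  weq : MorphismProperty C
  /-- (J1) isomorphisms are trivial cofibrations -/
  iso_triv_cofib : ∀ {X Y : C} (f : X ⟶ Y), IsIso f → cofib f ∧ weq f
  /-- (J1) isomorphisms are trivial fibrations -/
  iso_triv_fib : ∀ {X Y : C} (f : X ⟶ Y), IsIso f → fib f ∧ weq f
  fib_comp : ∀ {X Y Z : C} {f : X ⟶ Y} {g : Y ⟶ Z}, fib f → fib g → fib (f ≫ g)
  cofib_comp : ∀ {X Y Z : C} {f : X ⟶ Y} {g : Y ⟶ Z}, cofib f → cofib g → cofib (f ≫ g)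
  /-- (J1) two-out-of-three for weak equivalences -/
  weq_comp : ∀ {X Y Z : C} {f : X ⟶ Y} {g : Y ⟶ Z}, weq f → weq g → weq (f ≫ g)
  weq_of_comp_left : ∀ {X Y Z : C} {f : X ⟶ Y} {g : Y ⟶ Z}, weq g → weq (f ≫ g) → weq f
  weq_of_comp_right : ∀ {X Y Z : C} {f : X ⟶ Y} {g : Y ⟶ Z}, weq f → weq (f ≫ g) → weq g
  /-- (J2) pullbacks of fibrations exist, and the base extension is a fibration -/
  pb_exists : ∀ {E B B' : C} (p : E ⟶ B) (f : B' ⟶ B), fib p →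
    ∃ (P : C) (fb : P ⟶ E) (pb : P ⟶ B'), IsPullback fb pb p f ∧ fib pb
  /-- (J2) base extensions of weak equivalences along fibrations are weak equivalences -/
  pb_weq : ∀ {E B B' P : C} {p : E ⟶ B} {f : B' ⟶ B} {fb : P ⟶ E} {pb : P ⟶ B'},
    fib p → IsPullback fb pb p f → (weq f → weq fb) ∧ (weq p → weq pb)
  /-- (J2) dual: pushouts of cofibrations exist -/
  po_exists : ∀ {A X Y : C} (i : A ⟶ X) (g : A ⟶ Y), cofib i →
    ∃ (Q : C) (inl : X ⟶ Q) (inr : Y ⟶ Q), IsPushout i g inl inr ∧ cofib inr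
  po_weq : ∀ {A X Y Q : C} {i : A ⟶ X} {g : A ⟶ Y} {inl : X ⟶ Q} {inr : Y ⟶ Q},
    cofib i → IsPushout i g inl inr → (weq g → weq inl) ∧ (weq i → weq inr)
  /-- (J3) F-factorizations exist -/
  F_fac : ∀ {X Y : C} (f : X ⟶ Y), ∃ (Z : C) (τ : X ⟶ Z) (q : Z ⟶ Y),
    weq τ ∧ fib q ∧ τ ≫ q = f
  /-- (J3) C-factorizations exist -/
  C_fac : ∀ {X Y : C} (f : X ⟶ Y), ∃ (Z : C) (i : X ⟶ Z) (σ : Z ⟶ Y),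
    cofib i ∧ weq σ ∧ i ≫ σ = f
  /-- (J4) cofibrant replacements exist -/
  cof_replace : ∀ X : C, ∃ (Xb : C) (q : Xb ⟶ X), fib q ∧ weq q ∧
    (∀ {E : C} (p : E ⟶ Xb), fib p → weq p → ∃ s : Xb ⟶ E, s ≫ p = 𝟙 Xb)

variable {C}

namespace PreJCat

/-- An object is a cofibrant model if every trivial fibration onto it admits a section. -/
def CofModel (P : PreJCat C) (X : C) : Prop :=
  ∀ {E : C} (p : E ⟶ X), P.fib p → P.weq p → ∃ s : X ⟶ E, s ≫ p = 𝟙 X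

/-- An object is e-fibrant if the morphism to the zero object is a fibration. -/
def EFibrant (P : PreJCat C) (X : C) : Prop := P.fib (0 : X ⟶ 0)

/-- `f` admits a weak lifting along `g` (all objects being cofibrant models). -/
def WeakLifting (P : PreJCat C) {A B Cc : C} (f : A ⟶ B) (g : Cc ⟶ B) : Prop :=
  ∃ (E : C) (τ : Cc ⟶ E) (q : E ⟶ B), P.weq τ ∧ P.fib q ∧ τ ≫ q = g ∧
    ∃ s : A ⟶ E, s ≫ q = f

/-- `g` admits a weak section. -/
def HasWeakSection (P : PreJCat C) {E B : C} (g : E ⟶ B) : Prop :=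
  P.WeakLifting (𝟙 B) g

/-- `j : J ⟶ B` is a join morphism of `f : A ⟶ B` and `g : Cc ⟶ B`: built from an
F-factorization of `g`, a pullback, a C-factorization and a pushout. -/
def IsJoin (P : PreJCat C) {A Cc B J : C} (f : A ⟶ B) (g : Cc ⟶ B) (j : J ⟶ B) : Prop :=
  ∃ (E : C) (τ : Cc ⟶ E) (q : E ⟶ B), P.weq τ ∧ P.fib q ∧ τ ≫ q = g ∧
  ∃ (E' Z : C) (fbar : E' ⟶ E) (pbar : E' ⟶ A) (i : E' ⟶ Z) (σ : Z ⟶ E)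
    (a : A ⟶ J) (bz : Z ⟶ J),
    IsPullback fbar pbar q f ∧ P.cofib i ∧ P.weq σ ∧ i ≫ σ = fbar ∧
    IsPushout pbar i a bz ∧ a ≫ j = f ∧ bz ≫ j = σ ≫ q

/-- `IsIterJoin P p n h` : `h` is an `n`-th iterated join morphism `*ⁿ_B E ⟶ B` of `p`. -/
inductive IsIterJoin (P : PreJCat C) {E B : C} (p : E ⟶ B) : ℕ → ∀ {X : C}, (X ⟶ B) → Prop
  | zero : IsIterJoin P p 0 p
  | succ {n : ℕ} {X Y : C} {h : X ⟶ B} {h' : Y ⟶ B} :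
      IsIterJoin P p n h → P.IsJoin h p h' → IsIterJoin P p (n + 1) h'

/-- The Ganea-type sectional category of a morphism. -/
noncomputable def Gsecat (P : PreJCat C) {E B : C} (p : E ⟶ B) : ℕ∞ :=
  sInf {n : ℕ∞ | ∃ m : ℕ, n = (m : ℕ∞) ∧
    ∃ (X : C) (h : X ⟶ B), P.IsIterJoin p m h ∧ P.HasWeakSection h}

end PreJCat

/-- `p1, p2` exhibit `Pd` as a binary product of `X` and `Y`. -/
def IsBinProd {X Y Pd : C} (p1 : Pd ⟶ X) (p2 : Pd ⟶ Y) : Prop :=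
  Nonempty (IsLimit (BinaryFan.mk p1 p2))

namespace PreJCat

/-- `IsFatWedge P p n j Δ` : `j : Tⁿ(p) ⟶ B^{n+1}` is an `n`-th fat wedge morphism of `p`
together with the diagonal `Δ : B ⟶ B^{n+1}`. -/
inductive IsFatWedge (P : PreJCat C) {E B : C} (p : E ⟶ B) :
    ℕ → ∀ {T Pw : C}, (T ⟶ Pw) → (B ⟶ Pw) → Prop
  | zero : IsFatWedge P p 0 p (𝟙 B)
  | succ {n : ℕ} {T Pn : C} {j : T ⟶ Pn} {Δ : B ⟶ Pn}
      (hprev : IsFatWedge P p n j Δ)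
      {Pn1 : C} {pr1 : Pn1 ⟶ Pn} {pr2 : Pn1 ⟶ B} (hP : IsBinProd pr1 pr2)
      {TB : C} {q1 : TB ⟶ T} {q2 : TB ⟶ B} (hTB : IsBinProd q1 q2)
      {PE : C} {r1 : PE ⟶ Pn} {r2 : PE ⟶ E} (hPE : IsBinProd r1 r2)
      {jB : TB ⟶ Pn1} (hjB : jB ≫ pr1 = q1 ≫ j ∧ jB ≫ pr2 = q2)
      {pP : PE ⟶ Pn1} (hpP : pP ≫ pr1 = r1 ∧ pP ≫ pr2 = r2 ≫ p)
      {Tn1 : C} {j' : Tn1 ⟶ Pn1} (hjoin : P.IsJoin jB pP j')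
      {Δ' : B ⟶ Pn1} (hΔ : Δ' ≫ pr1 = Δ ∧ Δ' ≫ pr2 = 𝟙 B) :
      IsFatWedge P p (n + 1) j' Δ'

/-- The Whitehead-type sectional category of a morphism with e-fibrant codomain. -/
noncomputable def WsecatE (P : PreJCat C) {E B : C} (p : E ⟶ B) : ℕ∞ :=
  sInf {n : ℕ∞ | ∃ m : ℕ, n = (m : ℕ∞) ∧
    ∃ (T Pw : C) (j : T ⟶ Pw) (Δ : B ⟶ Pw), P.IsFatWedge p m j Δ ∧ P.WeakLifting Δ j}

/-- The Whitehead-type sectional category of an arbitrary morphism, via e-fibrant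
replacements of the codomain. -/
noncomputable def Wsecat (P : PreJCat C) {E B : C} (p : E ⟶ B) : ℕ∞ :=
  ⨅ (F : C) (τ : B ⟶ F) (_ : P.weq τ ∧ P.EFibrant F), P.WsecatE (p ≫ τ)

/-- A commutative square is a homotopy pullback. -/
def IsHPB (P : PreJCat C) {D A Cc B : C} (f' : D ⟶ Cc) (g' : D ⟶ A)
    (g : Cc ⟶ B) (f : A ⟶ B) : Prop :=
  f' ≫ g = g' ≫ f ∧ ∃ (E : C) (τ : Cc ⟶ E) (q : E ⟶ B), P.weq τ ∧ P.fib q ∧ τ ≫ q = g ∧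
    ∃ (Pt : C) (pr1 : Pt ⟶ E) (pr2 : Pt ⟶ A), IsPullback pr1 pr2 q f ∧
      ∃ w : D ⟶ Pt, P.weq w ∧ w ≫ pr1 = f' ≫ τ ∧ w ≫ pr2 = g'

/-- A commutative square is a homotopy pushout. -/
def IsHPO (P : PreJCat C) {A B Cc D : C} (f : A ⟶ B) (g : A ⟶ Cc)
    (i' : B ⟶ D) (j' : Cc ⟶ D) : Prop :=
  f ≫ i' = g ≫ j' ∧ ∃ (Z : C) (i : A ⟶ Z) (σ : Z ⟶ B), P.cofib i ∧ P.weq σ ∧ i ≫ σ = f ∧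
    ∃ (Q : C) (inl : Z ⟶ Q) (inr : Cc ⟶ Q), IsPushout i g inl inr ∧
      ∃ w : Q ⟶ D, P.weq w ∧ inl ≫ w = σ ≫ i' ∧ inr ≫ w = j'

/-- `A-A'-B'-B` is a weak pullback over `b : B ⟶ B'` (all objects cofibrant models). -/
def IsWeakPullback (P : PreJCat C) {A B A' B' : C}
    (f : A ⟶ B) (f' : A' ⟶ B') (b : B ⟶ B') : Prop :=
  ∃ (X : C) (τ : A' ⟶ X) (q : X ⟶ B'), P.weq τ ∧ P.fib q ∧ τ ≫ q = f' ∧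
    ∃ x : A ⟶ X, P.IsHPB x f q b

/-- `g : G ⟶ B` is an `n`-th Ganea map of `B`: the `n`-th iterated join of `0 ⟶ B`. -/
def IsGaneaMap (P : PreJCat C) (B : C) (n : ℕ) {G : C} (g : G ⟶ B) : Prop :=
  P.IsIterJoin (0 : (0 : C) ⟶ B) n g

/-- The Lusternik-Schnirelmann category of an object. -/
noncomputable def catObj (P : PreJCat C) (B : C) : ℕ∞ :=
  sInf {n : ℕ∞ | ∃ m : ℕ, n = (m : ℕ∞) ∧
    ∃ (G : C) (g : G ⟶ B), P.IsGaneaMap B m g ∧ P.HasWeakSection g}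

/-- The Lusternik-Schnirelmann category of a morphism `b : B ⟶ B'`:
least `n` such that `b` admits a weak lifting along the `n`-th Ganea map of `B'`. -/
noncomputable def catMor (P : PreJCat C) {B B' : C} (b : B ⟶ B') : ℕ∞ :=
  sInf {n : ℕ∞ | ∃ m : ℕ, n = (m : ℕ∞) ∧
    ∃ (G : C) (g : G ⟶ B'), P.IsGaneaMap B' m g ∧ P.WeakLifting b g}

/-- One step of a zigzag: a weak equivalence of morphisms in the arrow category. -/
def MorWeqStep (P : PreJCat C) (u v : Arrow C) : Prop :=
  ∃ h : u ⟶ v, P.weq h.left ∧ P.weq h.right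

/-- Two morphisms are weakly equivalent: joined by a finite zigzag of weak
equivalences of morphisms. -/
def WeaklyEquivMor (P : PreJCat C) (u v : Arrow C) : Prop :=
  Relation.EqvGen P.MorWeqStep u v

def ObjWeqStep (P : PreJCat C) (X Y : C) : Prop := ∃ f : X ⟶ Y, P.weq f

/-- Two objects are weakly equivalent: joined by a finite zigzag of weak equivalences. -/
def WeaklyEquivObj (P : PreJCat C) (X Y : C) : Prop :=
  Relation.EqvGen P.ObjWeqStep X Y

/-- The abstract topological complexity of an e-fibrant object:
the sectional category of the diagonal `B ⟶ B × B`. -/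
noncomputable def TCE (P : PreJCat C) (B : C) : ℕ∞ :=
  ⨅ (Pd : C) (p1 : Pd ⟶ B) (p2 : Pd ⟶ B) (_ : IsBinProd p1 p2)
    (Δ : B ⟶ Pd) (_ : Δ ≫ p1 = 𝟙 B ∧ Δ ≫ p2 = 𝟙 B), P.Gsecat Δ

/-- The abstract topological complexity of an arbitrary object, via e-fibrant
replacements. -/
noncomputable def TC (P : PreJCat C) (B : C) : ℕ∞ :=
  ⨅ (F : C) (τ : B ⟶ F) (_ : P.weq τ ∧ P.EFibrant F), P.TCE F

end PreJCat

variable (C)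

/-- A J-category: (J1)-(J4) together with the cube axiom (J5). -/
structure JCat extends PreJCat C where
  /-- (J5) the cube axiom: in a commutative cube whose bottom face is a homotopy
  pushout and whose vertical faces are homotopy pullbacks, the top face is a
  homotopy pushout. -/
  cube : ∀ {X00 X01 X10 X11 Y00 Y01 Y10 Y11 : C}
    {tf : X00 ⟶ X01} {tg : X00 ⟶ X10} {ti : X01 ⟶ X11} {tj : X10 ⟶ X11}
    {bf : Y00 ⟶ Y01} {bg : Y00 ⟶ Y10} {bi : Y01 ⟶ Y11} {bj : Y10 ⟶ Y11}
    {v00 : X00 ⟶ Y00} {v01 : X01 ⟶ Y01} {v10 : X10 ⟶ Y10} {v11 : X11 ⟶ Y11},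
    tf ≫ ti = tg ≫ tj →
    toPreJCat.IsHPO bf bg bi bj →
    toPreJCat.IsHPB tf v00 v01 bf →
    toPreJCat.IsHPB tg v00 v10 bg →
    toPreJCat.IsHPB ti v01 v11 bi →
    toPreJCat.IsHPB tj v10 v11 bj →
    toPreJCat.IsHPO tf tg ti tj

variable {C}

/-- A modelization functor: preserves weak equivalences, homotopy pullbacks and
homotopy pushouts. -/
structure ModelizationFunctor {D : Type u'} [Category.{v'} D] [HasZeroObject D]
    [HasZeroMorphisms D] (P : PreJCat C) (Q : PreJCat D) where
  F : C ⥤ D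
  map_weq : ∀ {X Y : C} (f : X ⟶ Y), P.weq f → Q.weq (F.map f)
  map_hpb : ∀ {Dd A Cc B : C} {f' : Dd ⟶ Cc} {g' : Dd ⟶ A} {g : Cc ⟶ B} {f : A ⟶ B},
    P.IsHPB f' g' g f → Q.IsHPB (F.map f') (F.map g') (F.map g) (F.map f)
  map_hpo : ∀ {A B Cc Dd : C} {f : A ⟶ B} {g : A ⟶ Cc} {i' : B ⟶ Dd} {j' : Cc ⟶ Dd},
    P.IsHPO f g i' j' → Q.IsHPO (F.map f) (F.map g) (F.map i') (F.map j')


/-! ### Auxiliary lemmas for the proof -/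

set_option linter.unusedSectionVars false
set_option maxHeartbeats 1000000

namespace PreJCat

section Aux

variable {C : Type u} [Category.{v} C] [HasZeroObject C] [HasZeroMorphisms C]
variable (P : PreJCat C)

lemma weq_id (X : C) : P.weq (𝟙 X) := (P.iso_triv_fib _ inferInstance).2

lemma fib_id (X : C) : P.fib (𝟙 X) := (P.iso_triv_fib _ inferInstance).1

lemma weq_iso {X Y : C} (f : X ⟶ Y) [IsIso f] : P.weq f := (P.iso_triv_fib f inferInstance).2

lemma fib_iso {X Y : C} (f : X ⟶ Y) [IsIso f] : P.fib f := (P.iso_triv_fib f inferInstance).1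

lemma cofib_iso {X Y : C} (f : X ⟶ Y) [IsIso f] : P.cofib f :=
  (P.iso_triv_cofib f inferInstance).1

/-- In any pullback square along a fibration, the base extension is a fibration. -/
lemma fib_snd_of_isPullback {E B B' Pt : C} {p : E ⟶ B} {f : B' ⟶ B} {fb : Pt ⟶ E}
    {pb : Pt ⟶ B'} (h : IsPullback fb pb p f) (hp : P.fib p) : P.fib pb := by
  obtain ⟨Q, fb', pb', h', hfib⟩ := P.pb_exists p f hp
  have e : pb = (h.isoIsPullback _ _ h').hom ≫ pb' := by
    rw [IsPullback.isoIsPullback_hom_snd]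
  rw [e]
  exact P.fib_comp (P.fib_iso _) hfib

/-- In any pushout square along a cofibration, the cobase extension is a cofibration. -/
lemma cofib_inr_of_isPushout {A X Y Q : C} {i : A ⟶ X} {g : A ⟶ Y} {inl : X ⟶ Q}
    {inr : Y ⟶ Q} (h : IsPushout i g inl inr) (hi : P.cofib i) : P.cofib inr := by
  obtain ⟨Q', inl', inr', h', hcof⟩ := P.po_exists i g hi
  have e : inr = inr' ≫ (h'.isoIsPushout _ _ h).hom := by
    rw [IsPushout.inr_isoIsPushout_hom]
  rw [e]
  exact P.cofib_comp hcof (P.cofib_iso _)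

/-- A map whose composite with a morphism to the zero object is considered: it is zero. -/
lemma _root_.to_zero_eq {X Y : C} (f : X ⟶ Y) (g : Y ⟶ (0 : C)) : f ≫ g = (0 : X ⟶ 0) :=
  HasZeroObject.zeroIsTerminal.hom_ext _ _

lemma efibrant_of_fib_comp {X Y : C} (q : X ⟶ Y) (hq : P.fib q) (hY : P.EFibrant Y) :
    P.EFibrant X := by
  have : q ≫ (0 : Y ⟶ 0) = (0 : X ⟶ 0) := to_zero_eq _ _
  rw [EFibrant, ← this]
  exact P.fib_comp hq hY

end Aux

end PreJCat

section ProdAux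

variable {C : Type u} [Category.{v} C] [HasZeroObject C] [HasZeroMorphisms C]

/-- A binary product diagram is a pullback over the zero object. -/
lemma IsBinProd.isPullback {X Y Pd : C} {p1 : Pd ⟶ X} {p2 : Pd ⟶ Y} (h : IsBinProd p1 p2) :
    IsPullback p1 p2 (0 : X ⟶ 0) (0 : Y ⟶ 0) := by
  obtain ⟨hl⟩ := h
  convert IsPullback.of_is_product' hl HasZeroObject.zeroIsTerminal using 2 <;>
    exact HasZeroObject.zeroIsTerminal.hom_ext _ _

/-- A pullback over the zero object is a binary product diagram. -/
lemma isBinProd_of_isPullback {X Y Pd : C} {p1 : Pd ⟶ X} {p2 : Pd ⟶ Y}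
    (h : IsPullback p1 p2 (0 : X ⟶ 0) (0 : Y ⟶ 0)) : IsBinProd p1 p2 := by
  refine ⟨isProductOfIsTerminalIsPullback (0 : X ⟶ 0) (0 : Y ⟶ 0) p1 p2
    HasZeroObject.zeroIsTerminal ?_⟩
  exact h.isLimit

noncomputable def IsBinProd.lift {X Y Pd W : C} {p1 : Pd ⟶ X} {p2 : Pd ⟶ Y}
    (h : IsBinProd p1 p2) (a : W ⟶ X) (b : W ⟶ Y) : W ⟶ Pd :=
  h.isPullback.lift a b (by simp)

@[simp] lemma IsBinProd.lift_fst {X Y Pd W : C} {p1 : Pd ⟶ X} {p2 : Pd ⟶ Y}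
    (h : IsBinProd p1 p2) (a : W ⟶ X) (b : W ⟶ Y) : h.lift a b ≫ p1 = a :=
  h.isPullback.lift_fst a b _

@[simp] lemma IsBinProd.lift_snd {X Y Pd W : C} {p1 : Pd ⟶ X} {p2 : Pd ⟶ Y}
    (h : IsBinProd p1 p2) (a : W ⟶ X) (b : W ⟶ Y) : h.lift a b ≫ p2 = b :=
  h.isPullback.lift_snd a b _

lemma IsBinProd.hom_ext {X Y Pd W : C} {p1 : Pd ⟶ X} {p2 : Pd ⟶ Y}
    (h : IsBinProd p1 p2) {k l : W ⟶ Pd} (h1 : k ≫ p1 = l ≫ p1) (h2 : k ≫ p2 = l ≫ p2) :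
    k = l :=
  h.isPullback.hom_ext h1 h2

variable (P : PreJCat C)

/-- Binary products with an e-fibrant object exist. -/
lemma PreJCat.exists_binProd (X Y : C) (hY : P.EFibrant Y) :
    ∃ (Pd : C) (p1 : Pd ⟶ X) (p2 : Pd ⟶ Y), IsBinProd p1 p2 ∧ P.fib p1 := by
  obtain ⟨Q, fb, pb, hpb, hfib⟩ := P.pb_exists (0 : Y ⟶ 0) (0 : X ⟶ 0) hY
  exact ⟨Q, pb, fb, isBinProd_of_isPullback hpb.flip, hfib⟩

lemma PreJCat.fib_fst_of_binProd {X Y Pd : C} {p1 : Pd ⟶ X} {p2 : Pd ⟶ Y}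
    (h : IsBinProd p1 p2) (hY : P.EFibrant Y) : P.fib p1 :=
  P.fib_snd_of_isPullback h.isPullback.flip hY

lemma PreJCat.efibrant_binProd {X Y Pd : C} {p1 : Pd ⟶ X} {p2 : Pd ⟶ Y}
    (h : IsBinProd p1 p2) (hX : P.EFibrant X) (hY : P.EFibrant Y) : P.EFibrant Pd :=
  P.efibrant_of_fib_comp p1 (P.fib_fst_of_binProd h hY) hX

end ProdAux


section ZigWL

variable {C : Type u} [Category.{v} C] [HasZeroObject C] [HasZeroMorphisms C]

namespace PreJCat

variable (P : PreJCat C)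

/-- One step of a zigzag of weak equivalences over a fixed base. -/
def ZigStep {Pw : C} (u v : (T : C) × (T ⟶ Pw)) : Prop :=
  ∃ e : u.1 ⟶ v.1, P.weq e ∧ e ≫ v.2 = u.2

/-- Zigzags of weak equivalences over a fixed base. -/
def ZigOver {Pw : C} (u v : (T : C) × (T ⟶ Pw)) : Prop :=
  Relation.EqvGen P.ZigStep u v

variable {P}

lemma zig_fwd {Pw T T' : C} {j : T ⟶ Pw} {j' : T' ⟶ Pw} (e : T ⟶ T') (he : P.weq e)
    (hej : e ≫ j' = j) : P.ZigOver ⟨T, j⟩ ⟨T', j'⟩ :=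
  Relation.EqvGen.rel _ _ ⟨e, he, hej⟩

lemma zig_bwd {Pw T T' : C} {j : T ⟶ Pw} {j' : T' ⟶ Pw} (e : T' ⟶ T) (he : P.weq e)
    (hej : e ≫ j = j') : P.ZigOver ⟨T, j⟩ ⟨T', j'⟩ :=
  Relation.EqvGen.symm _ _ (zig_fwd e he hej)

lemma ZigOver.trans {Pw : C} {u v w : (T : C) × (T ⟶ Pw)} (h : P.ZigOver u v)
    (h' : P.ZigOver v w) : P.ZigOver u w :=
  Relation.EqvGen.trans _ _ _ h h'

lemma ZigOver.symm {Pw : C} {u v : (T : C) × (T ⟶ Pw)} (h : P.ZigOver u v) :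
    P.ZigOver v u :=
  Relation.EqvGen.symm _ _ h

lemma ZigOver.refl {Pw : C} (u : (T : C) × (T ⟶ Pw)) : P.ZigOver u u :=
  Relation.EqvGen.refl u

/-- Easy direction of weak-lifting transfer along a weak equivalence over the base. -/
lemma weakLifting_of_weq_comp {T T' Pw A : C} {j : T ⟶ Pw} {j' : T' ⟶ Pw} {Δ : A ⟶ Pw}
    (e : T ⟶ T') (he : P.weq e) (hej : e ≫ j' = j) (h : P.WeakLifting Δ j') :
    P.WeakLifting Δ j := by
  obtain ⟨E₁, τ, q, hτ, hq, hfac, s, hs⟩ := h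
  exact ⟨E₁, e ≫ τ, q, P.weq_comp he hτ, hq, by rw [Category.assoc, hfac, hej], s, hs⟩

/-- If `Δ` admits a weak lifting along `j`, then for *any* F-factorization of `j`
there is a section over `Δ` (uses that all objects are cofibrant models). -/
lemma section_of_fact (hc : ∀ X : C, P.CofModel X) {T Pw A : C} {j : T ⟶ Pw} {Δ : A ⟶ Pw}
    (h : P.WeakLifting Δ j) {E₀ : C} (τ₀ : T ⟶ E₀) (q₀ : E₀ ⟶ Pw) (hτ₀ : P.weq τ₀)
    (hq₀ : P.fib q₀) (hfac₀ : τ₀ ≫ q₀ = j) : ∃ s : A ⟶ E₀, s ≫ q₀ = Δ := by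
  obtain ⟨E₁, τ, q, hτ, hq, hfac, s, hs⟩ := h
  obtain ⟨X, fbX, pbX, hX, hfibpb⟩ := P.pb_exists q₀ q hq₀
  have hy : τ₀ ≫ q₀ = τ ≫ q := by rw [hfac₀, hfac]
  set y : T ⟶ X := hX.lift τ₀ τ hy with hy'
  obtain ⟨N, τN, πN, hτN, hπN, hNfac⟩ := P.F_fac y
  have hρf : P.fib (πN ≫ pbX) := P.fib_comp hπN hfibpb
  have hρw : P.weq (πN ≫ pbX) := by
    refine P.weq_of_comp_right hτN ?_
    have : τN ≫ πN ≫ pbX = τ := by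
      rw [← Category.assoc, hNfac, hy', hX.lift_snd]
    rw [this]; exact hτ
  obtain ⟨sN, hsN⟩ := hc E₁ (πN ≫ pbX) hρf hρw
  refine ⟨s ≫ sN ≫ πN ≫ fbX, ?_⟩
  have h1 : fbX ≫ q₀ = pbX ≫ q := hX.w
  calc (s ≫ sN ≫ πN ≫ fbX) ≫ q₀ = s ≫ sN ≫ πN ≫ (fbX ≫ q₀) := by simp [Category.assoc]
    _ = s ≫ sN ≫ (πN ≫ pbX) ≫ q := by rw [h1]; simp [Category.assoc]
    _ = s ≫ (sN ≫ (πN ≫ pbX)) ≫ q := by simp [Category.assoc]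
    _ = s ≫ q := by rw [hsN]; simp
    _ = Δ := hs

/-- Hard direction of weak-lifting transfer along a weak equivalence over the base. -/
lemma weakLifting_of_weq_comp' (hc : ∀ X : C, P.CofModel X) {T T' Pw A : C} {j : T ⟶ Pw}
    {j' : T' ⟶ Pw} {Δ : A ⟶ Pw} (e : T ⟶ T') (he : P.weq e) (hej : e ≫ j' = j)
    (h : P.WeakLifting Δ j) : P.WeakLifting Δ j' := by
  obtain ⟨E₀, τ₀, q₀, hτ₀, hq₀, hfac₀⟩ := P.F_fac j'
  obtain ⟨s, hs⟩ := P.section_of_fact hc h (e ≫ τ₀) q₀ (P.weq_comp he hτ₀) hq₀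
    (by rw [Category.assoc, hfac₀, hej])
  exact ⟨E₀, τ₀, q₀, hτ₀, hq₀, hfac₀, s, hs⟩

/-- Weak lifting only depends on the zigzag class of the morphism over the base. -/
lemma zig_wl (hc : ∀ X : C, P.CofModel X) {Pw : C} {u v : (T : C) × (T ⟶ Pw)}
    (h : P.ZigOver u v) {A : C} (Δ : A ⟶ Pw) :
    (P.WeakLifting Δ u.2 ↔ P.WeakLifting Δ v.2) := by
  induction h with
  | rel u v h =>
    obtain ⟨e, he, hej⟩ := h
    exact ⟨fun hw => P.weakLifting_of_weq_comp' hc e he hej hw,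
      fun hw => P.weakLifting_of_weq_comp e he hej hw⟩
  | refl u => exact Iff.rfl
  | symm u v _ ih => exact ih.symm
  | trans u v w _ _ ih1 ih2 => exact ih1.trans ih2

end PreJCat

end ZigWL


section JoinAux

variable {C : Type u} [Category.{v} C] [HasZeroObject C] [HasZeroMorphisms C]

/-- A pushout square may be precomposed with an isomorphism on the initial corner. -/
lemma isPushout_precomp_iso {A A' X Y Q : C} {f : A ⟶ X} {g : A ⟶ Y} {inl : X ⟶ Q}
    {inr : Y ⟶ Q} (h : IsPushout f g inl inr) (e : A' ⟶ A) [IsIso e] :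
    IsPushout (e ≫ f) (e ≫ g) inl inr :=
  h.of_iso (asIso e).symm (Iso.refl _) (Iso.refl _) (Iso.refl _)
    (by simp) (by simp) (by simp) (by simp)

namespace PreJCat

variable (P : PreJCat C)

/-- The join construction on a fixed fibration `q` (the F-factorization being separate). -/
def JoinOn {A B Eo J : C} (f : A ⟶ B) (q : Eo ⟶ B) (j : J ⟶ B) : Prop :=
  ∃ (E' Z : C) (fbar : E' ⟶ Eo) (pbar : E' ⟶ A) (i : E' ⟶ Z) (σ : Z ⟶ Eo)
    (a : A ⟶ J) (bz : Z ⟶ J),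
    IsPullback fbar pbar q f ∧ P.cofib i ∧ P.weq σ ∧ i ≫ σ = fbar ∧
    IsPushout pbar i a bz ∧ a ≫ j = f ∧ bz ≫ j = σ ≫ q

variable {P}

lemma IsJoin.exists_joinOn {A Cc B J : C} {f : A ⟶ B} {g : Cc ⟶ B} {j : J ⟶ B}
    (h : P.IsJoin f g j) :
    ∃ (Eo : C) (τ : Cc ⟶ Eo) (q : Eo ⟶ B), P.weq τ ∧ P.fib q ∧ τ ≫ q = g ∧
      P.JoinOn f q j := by
  obtain ⟨Eo, τ, q, hτ, hq, hfac, E', Z, fbar, pbar, i, σ, a, bz, rest⟩ := h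
  exact ⟨Eo, τ, q, hτ, hq, hfac, E', Z, fbar, pbar, i, σ, a, bz, rest⟩

lemma isJoin_of_joinOn {A Cc B Eo J : C} {f : A ⟶ B} {g : Cc ⟶ B} {τ : Cc ⟶ Eo}
    {q : Eo ⟶ B} {j : J ⟶ B} (hτ : P.weq τ) (hq : P.fib q) (hfac : τ ≫ q = g)
    (h : P.JoinOn f q j) : P.IsJoin f g j := by
  obtain ⟨E', Z, fbar, pbar, i, σ, a, bz, rest⟩ := h
  exact ⟨Eo, τ, q, hτ, hq, hfac, E', Z, fbar, pbar, i, σ, a, bz, rest⟩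

lemma joinOn_exists (P : PreJCat C) {A B Eo : C} (f : A ⟶ B) (q : Eo ⟶ B) (hq : P.fib q) :
    ∃ (J : C) (j : J ⟶ B), P.JoinOn f q j := by
  obtain ⟨E', fbar, pbar, hpb, _⟩ := P.pb_exists q f hq
  obtain ⟨Z, i, σ, hi, hσ, hiσ⟩ := P.C_fac fbar
  obtain ⟨Q, inl, inr, hpo, _⟩ := P.po_exists i pbar hi
  have hcomm : i ≫ σ ≫ q = pbar ≫ f := by rw [← Category.assoc, hiσ, hpb.w]
  exact ⟨Q, hpo.desc (σ ≫ q) f hcomm, E', Z, fbar, pbar, i, σ, inr, inl, hpb, hi, hσ, hiσ,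
    hpo.flip, hpo.inr_desc _ _ _, hpo.inl_desc _ _ _⟩

lemma exists_join (P : PreJCat C) {A Cc B : C} (f : A ⟶ B) (g : Cc ⟶ B) :
    ∃ (J : C) (j : J ⟶ B), P.IsJoin f g j := by
  obtain ⟨Eo, τ, q, hτ, hq, hfac⟩ := P.F_fac g
  obtain ⟨J, j, hJ⟩ := P.joinOn_exists f q hq
  exact ⟨J, j, isJoin_of_joinOn hτ hq hfac hJ⟩

/-- Two joins over the same span-pushout data are linked. -/
lemma zig_of_pushout_unique {X Y W B Q₁ Q₂ : C} {s : W ⟶ X} {t : W ⟶ Y}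
    {a₁ : X ⟶ Q₁} {b₁ : Y ⟶ Q₁} {a₂ : X ⟶ Q₂} {b₂ : Y ⟶ Q₂}
    (h₁ : IsPushout s t a₁ b₁) (h₂ : IsPushout s t a₂ b₂)
    {j₁ : Q₁ ⟶ B} {j₂ : Q₂ ⟶ B} {k : X ⟶ B} {l : Y ⟶ B}
    (ha₁ : a₁ ≫ j₁ = k) (hb₁ : b₁ ≫ j₁ = l) (ha₂ : a₂ ≫ j₂ = k) (hb₂ : b₂ ≫ j₂ = l) :
    P.ZigOver ⟨Q₁, j₁⟩ ⟨Q₂, j₂⟩ := by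
  refine zig_fwd (h₁.isoIsPushout _ _ h₂).hom (P.weq_iso _) (h₁.hom_ext ?_ ?_)
  · rw [← Category.assoc, IsPushout.inl_isoIsPushout_hom, ha₂, ha₁]
  · rw [← Category.assoc, IsPushout.inr_isoIsPushout_hom, hb₂, hb₁]

/-- Enlarging the C-factorization along a trivial cofibration yields a linked join. -/
lemma joinOn_step {A B Eo J Z₃ : C} {f : A ⟶ B} {q : Eo ⟶ B} {j : J ⟶ B}
    {E' Z : C} {fbar : E' ⟶ Eo} {pbar : E' ⟶ A} {i : E' ⟶ Z} {σ : Z ⟶ Eo}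
    {a : A ⟶ J} {bz : Z ⟶ J}
    (sq : IsPullback fbar pbar q f) (hi : P.cofib i) (hσ : P.weq σ) (hiσ : i ≫ σ = fbar)
    (hpo : IsPushout pbar i a bz) (haj : a ≫ j = f) (hbz : bz ≫ j = σ ≫ q)
    {i₃ : E' ⟶ Z₃} {σ₃ : Z₃ ⟶ Eo} (hσ₃ : P.weq σ₃)
    (zk : Z ⟶ Z₃) (hzkc : P.cofib zk) (hzkw : P.weq zk) (hizk : i ≫ zk = i₃)
    (hzkσ : zk ≫ σ₃ = σ) :
    ∃ (Q : C) (jQ : Q ⟶ B) (aQ : A ⟶ Q) (bzQ : Z₃ ⟶ Q),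
      IsPushout pbar i₃ aQ bzQ ∧ aQ ≫ jQ = f ∧ bzQ ≫ jQ = σ₃ ≫ q ∧
      P.ZigOver ⟨J, j⟩ ⟨Q, jQ⟩ := by
  obtain ⟨Q, l, r, hpoQ, _⟩ := P.po_exists zk bz hzkc
  -- hpoQ : IsPushout zk bz l r, l : Z₃ ⟶ Q, r : J ⟶ Q
  have hr : P.weq r := (P.po_weq hzkc hpoQ).2 hzkw
  have hcomm : zk ≫ σ₃ ≫ q = bz ≫ j := by rw [← Category.assoc, hzkσ, hbz]
  set jQ := hpoQ.desc (σ₃ ≫ q) j hcomm with hjQ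
  have hl : l ≫ jQ = σ₃ ≫ q := hpoQ.inl_desc _ _ _
  have hrj : r ≫ jQ = j := hpoQ.inr_desc _ _ _
  -- paste pushouts: composite is a pushout of (pbar, i₃)
  have pasted : IsPushout i₃ pbar l (a ≫ r) := by
    have h0 := IsPushout.paste_horiz hpo.flip hpoQ
    rwa [hizk] at h0
  refine ⟨Q, jQ, a ≫ r, l, pasted.flip, ?_, hl, zig_fwd r hr hrj⟩
  rw [Category.assoc, hrj, haj]

/-- Any two joins on the same fibration are linked. -/
lemma joinOn_link_samefib {A B Eo J₁ J₂ : C} {f : A ⟶ B} {q : Eo ⟶ B} (hq : P.fib q)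
    {j₁ : J₁ ⟶ B} {j₂ : J₂ ⟶ B} (h₁ : P.JoinOn f q j₁) (h₂ : P.JoinOn f q j₂) :
    P.ZigOver ⟨J₁, j₁⟩ ⟨J₂, j₂⟩ := by
  obtain ⟨E₁', Z₁, fbar₁, pbar₁, i₁, σ₁, a₁, bz₁, sq₁, hi₁, hσ₁, hiσ₁, hpo₁, haj₁, hbz₁⟩ := h₁
  obtain ⟨E₂', Z₂, fbar₂, pbar₂, i₂, σ₂, a₂, bz₂, sq₂, hi₂, hσ₂, hiσ₂, hpo₂, haj₂, hbz₂⟩ := h₂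
  -- normalize the pullback of side 2 to side 1 via the canonical iso
  set e := sq₂.isoIsPullback _ _ sq₁ with he
  set i₂' : E₁' ⟶ Z₂ := e.inv ≫ i₂ with hi₂'def
  have hi₂' : P.cofib i₂' := P.cofib_comp (P.cofib_iso _) hi₂
  have hiσ₂' : i₂' ≫ σ₂ = fbar₁ := by
    rw [hi₂'def, Category.assoc, hiσ₂, IsPullback.isoIsPullback_inv_fst]
  have hpo₂' : IsPushout pbar₁ i₂' a₂ bz₂ := by
    have h0 := isPushout_precomp_iso hpo₂ e.inv
    rwa [IsPullback.isoIsPullback_inv_snd, ← hi₂'def] at h0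
  -- common enlargement of the two C-factorizations
  obtain ⟨W, w₁, w₂, hpoW, hw₂c⟩ := P.po_exists i₁ i₂' hi₁
  have hw₁c : P.cofib w₁ := P.cofib_inr_of_isPushout hpoW.flip hi₂'
  have hcomm : i₁ ≫ σ₁ = i₂' ≫ σ₂ := by rw [hiσ₁, hiσ₂']
  set uW := hpoW.desc σ₁ σ₂ hcomm with huW
  obtain ⟨Z₃, cW, σ₃, hcW, hσ₃, hfacW⟩ := P.C_fac uW
  set zk₁ := w₁ ≫ cW with hzk₁
  set zk₂ := w₂ ≫ cW with hzk₂
  set i₃ := i₁ ≫ zk₁ with hi₃def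
  have hzk₁σ : zk₁ ≫ σ₃ = σ₁ := by
    rw [hzk₁, Category.assoc, hfacW]; exact hpoW.inl_desc _ _ _
  have hzk₂σ : zk₂ ≫ σ₃ = σ₂ := by
    rw [hzk₂, Category.assoc, hfacW]; exact hpoW.inr_desc _ _ _
  have hzk₁c : P.cofib zk₁ := P.cofib_comp hw₁c hcW
  have hzk₂c : P.cofib zk₂ := P.cofib_comp hw₂c hcW
  have hzk₁w : P.weq zk₁ := P.weq_of_comp_left hσ₃ (by rw [hzk₁σ]; exact hσ₁)
  have hzk₂w : P.weq zk₂ := P.weq_of_comp_left hσ₃ (by rw [hzk₂σ]; exact hσ₂)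
  have hizk₂ : i₂' ≫ zk₂ = i₃ := by
    rw [hi₃def, hzk₁, hzk₂, ← Category.assoc, ← Category.assoc, hpoW.w]
  obtain ⟨Q₁, jQ₁, aQ₁, bzQ₁, hpoQ₁, haQ₁, hbzQ₁, zig₁⟩ :=
    P.joinOn_step sq₁ hi₁ hσ₁ hiσ₁ hpo₁ haj₁ hbz₁ hσ₃ zk₁ hzk₁c hzk₁w rfl hzk₁σ
  obtain ⟨Q₂, jQ₂, aQ₂, bzQ₂, hpoQ₂, haQ₂, hbzQ₂, zig₂⟩ :=
    P.joinOn_step sq₁ hi₂' hσ₂ hiσ₂' hpo₂' haj₂ hbz₂ hσ₃ zk₂ hzk₂c hzk₂w hizk₂ hzk₂σ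
  exact (zig₁.trans (P.zig_of_pushout_unique hpoQ₁ hpoQ₂ haQ₁ hbzQ₁ haQ₂ hbzQ₂)).trans
    zig₂.symm

/-- Refining the fibration by a trivial fibration yields a linked join. -/
lemma joinOn_refine {A B Eo M J : C} {f : A ⟶ B} {q : Eo ⟶ B} (hq : P.fib q)
    (ρ : M ⟶ Eo) (hρf : P.fib ρ) (hρw : P.weq ρ) {j : J ⟶ B} (h : P.JoinOn f q j) :
    ∃ (JM : C) (jM : JM ⟶ B), P.JoinOn f (ρ ≫ q) jM ∧ P.ZigOver ⟨J, j⟩ ⟨JM, jM⟩ := by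
  obtain ⟨E', Z, fbar, pbar, i, σ, a, bz, sq, hi, hσ, hiσ, hpo, haj, hbz⟩ := h
  obtain ⟨E'M, fbarM, pbarM, sqM, _⟩ := P.pb_exists (ρ ≫ q) f (P.fib_comp hρf hq)
  have hcomm1 : (fbarM ≫ ρ) ≫ q = pbarM ≫ f := by rw [Category.assoc]; exact sqM.w
  set ρ'' := sq.lift (fbarM ≫ ρ) pbarM hcomm1 with hρ''
  have hsq'' : IsPullback fbarM ρ'' ρ fbar := by
    refine IsPullback.of_bot ?_ ?_ sq
    · rw [sq.lift_snd]; exact sqM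
    · rw [sq.lift_fst]
  have hρ''w : P.weq ρ'' := (P.pb_weq hρf hsq'').2 hρw
  obtain ⟨ZM', μ, ζ, sqζ, hfibζ⟩ := P.pb_exists ρ σ hρf
  have hζw : P.weq ζ := (P.pb_weq hρf sqζ).2 hρw
  have hμw : P.weq μ := P.weq_of_comp_left hρw (by rw [sqζ.w]; exact P.weq_comp hζw hσ)
  have hcomm2 : fbarM ≫ ρ = (ρ'' ≫ i) ≫ σ := by
    rw [Category.assoc, hiσ, hρ'', sq.lift_fst]
  set y := sqζ.lift fbarM (ρ'' ≫ i) hcomm2 with hy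
  obtain ⟨V, c, ϑ, hcc, hϑ, hcϑ⟩ := P.C_fac y
  obtain ⟨T, inlT, cT, hpoT, hcTc⟩ := P.po_exists c ρ'' hcc
  have hinlTw : P.weq inlT := (P.po_weq hcc hpoT).1 hρ''w
  have hcomm3 : c ≫ ϑ ≫ ζ = ρ'' ≫ i := by rw [← Category.assoc, hcϑ, hy, sqζ.lift_snd]
  set t := hpoT.desc (ϑ ≫ ζ) i hcomm3 with ht
  have htl : inlT ≫ t = ϑ ≫ ζ := hpoT.inl_desc _ _ _
  have htr : cT ≫ t = i := hpoT.inr_desc _ _ _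
  have htw : P.weq t := P.weq_of_comp_right hinlTw (by rw [htl]; exact P.weq_comp hϑ hζw)
  -- the M-side join
  obtain ⟨JM, inlV, inrA, hpoJM, _⟩ := P.po_exists c pbarM hcc
  have hyμ : y ≫ μ = fbarM := sqζ.lift_fst _ _ _
  have hcμ : c ≫ ϑ ≫ μ = fbarM := by rw [← Category.assoc, hcϑ, hyμ]
  have hcμ' : (c ≫ ϑ) ≫ μ = fbarM := by rw [Category.assoc]; exact hcμ
  have hcomm4 : c ≫ (ϑ ≫ μ) ≫ ρ ≫ q = pbarM ≫ f := by
    simp only [← Category.assoc]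
    rw [hcμ', Category.assoc]
    exact sqM.w
  set jM := hpoJM.desc ((ϑ ≫ μ) ≫ ρ ≫ q) f hcomm4 with hjM
  have hJM : P.JoinOn f (ρ ≫ q) jM := by
    refine ⟨E'M, V, fbarM, pbarM, c, ϑ ≫ μ, inrA, inlV, sqM, hcc,
      P.weq_comp hϑ hμw, hcμ, hpoJM.flip, hpoJM.inr_desc _ _ _, ?_⟩
    rw [hjM, hpoJM.inl_desc]
  -- the auxiliary join on q with C-factorization (cT, t ≫ σ)
  obtain ⟨J', inlT', inrA', hpoJ', _⟩ := P.po_exists cT pbar hcTc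
  have hcomm5 : cT ≫ (t ≫ σ) ≫ q = pbar ≫ f := by
    simp only [← Category.assoc]
    rw [htr, hiσ]
    exact sq.w
  set j' := hpoJ'.desc ((t ≫ σ) ≫ q) f hcomm5 with hj'
  have hJ' : P.JoinOn f q j' := by
    refine ⟨E', T, fbar, pbar, cT, t ≫ σ, inrA', inlT', sq, hcTc,
      P.weq_comp htw hσ, ?_, hpoJ'.flip, hpoJ'.inr_desc _ _ _, hpoJ'.inl_desc _ _ _⟩
    rw [← Category.assoc, htr, hiσ]
  have zig1 : P.ZigOver ⟨J, j⟩ ⟨J', j'⟩ :=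
    P.joinOn_link_samefib hq ⟨E', Z, fbar, pbar, i, σ, a, bz, sq, hi, hσ, hiσ, hpo, haj, hbz⟩ hJ'
  -- JM and J' are pushouts of the same span (pasting)
  have pasted : IsPushout c pbarM (inlT ≫ inlT') inrA' := by
    have h0 := IsPushout.paste_vert hpoT hpoJ'
    rwa [hρ'', sq.lift_snd] at h0
  have hcompat : (hpoJM.isoIsPushout _ _ pasted).hom ≫ j' = jM := by
    refine hpoJM.hom_ext ?_ ?_
    · rw [← Category.assoc, IsPushout.inl_isoIsPushout_hom, Category.assoc, hj',
        hpoJ'.inl_desc, hjM, hpoJM.inl_desc]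
      simp only [← Category.assoc]
      rw [htl, Category.assoc ϑ ζ σ, ← sqζ.w]
      simp only [Category.assoc]
    · rw [← Category.assoc, IsPushout.inr_isoIsPushout_hom, hj', hpoJ'.inr_desc, hjM,
        hpoJM.inr_desc]
  have zig2 : P.ZigOver ⟨J', j'⟩ ⟨JM, jM⟩ := zig_bwd _ (P.weq_iso _) hcompat
  exact ⟨JM, jM, hJM, zig1.trans zig2⟩

/-- Any two joins of the same pair of morphisms are linked over the base. -/
lemma join_link {A Cc B J₁ J₂ : C} {f : A ⟶ B} {g : Cc ⟶ B} {j₁ : J₁ ⟶ B} {j₂ : J₂ ⟶ B}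
    (h₁ : P.IsJoin f g j₁) (h₂ : P.IsJoin f g j₂) : P.ZigOver ⟨J₁, j₁⟩ ⟨J₂, j₂⟩ := by
  obtain ⟨E₁, τ₁, q₁, hτ₁, hq₁, hfac₁, hJo₁⟩ := h₁.exists_joinOn
  obtain ⟨E₂, τ₂, q₂, hτ₂, hq₂, hfac₂, hJo₂⟩ := h₂.exists_joinOn
  obtain ⟨X, fbX, pbX, sqX, hfpbX⟩ := P.pb_exists q₂ q₁ hq₂
  have hffbX : P.fib fbX := P.fib_snd_of_isPullback sqX.flip hq₁
  have hycomm : τ₂ ≫ q₂ = τ₁ ≫ q₁ := by rw [hfac₁, hfac₂]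
  set y := sqX.lift τ₂ τ₁ hycomm with hy
  obtain ⟨M, τM, πM, hτM, hπM, hMfac⟩ := P.F_fac y
  have hρ₁f : P.fib (πM ≫ pbX) := P.fib_comp hπM hfpbX
  have hρ₁w : P.weq (πM ≫ pbX) := by
    refine P.weq_of_comp_right hτM ?_
    have : τM ≫ πM ≫ pbX = τ₁ := by rw [← Category.assoc, hMfac, hy, sqX.lift_snd]
    rw [this]; exact hτ₁
  have hρ₂f : P.fib (πM ≫ fbX) := P.fib_comp hπM hffbX
  have hρ₂w : P.weq (πM ≫ fbX) := by
    refine P.weq_of_comp_right hτM ?_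
    have : τM ≫ πM ≫ fbX = τ₂ := by rw [← Category.assoc, hMfac, hy, sqX.lift_fst]
    rw [this]; exact hτ₂
  have hqcomp : (πM ≫ fbX) ≫ q₂ = (πM ≫ pbX) ≫ q₁ := by
    simp only [Category.assoc]; rw [sqX.w]
  obtain ⟨JM₁, jM₁, hJoM₁, zig₁⟩ := P.joinOn_refine hq₁ (πM ≫ pbX) hρ₁f hρ₁w hJo₁
  obtain ⟨JM₂, jM₂, hJoM₂, zig₂⟩ := P.joinOn_refine hq₂ (πM ≫ fbX) hρ₂f hρ₂w hJo₂
  rw [hqcomp] at hJoM₂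
  have link := P.joinOn_link_samefib (P.fib_comp hρ₁f hq₁) hJoM₁ hJoM₂
  exact (zig₁.trans link).trans zig₂.symm

/-- Joins of weakly equivalent second inputs are linked. -/
lemma join_link_g {A B Cc₁ Cc₂ J₁ J₂ : C} {f : A ⟶ B} {g₁ : Cc₁ ⟶ B} {g₂ : Cc₂ ⟶ B}
    {j₁ : J₁ ⟶ B} {j₂ : J₂ ⟶ B} (v : Cc₁ ⟶ Cc₂) (hv : P.weq v) (hvg : v ≫ g₂ = g₁)
    (h₁ : P.IsJoin f g₁ j₁) (h₂ : P.IsJoin f g₂ j₂) : P.ZigOver ⟨J₁, j₁⟩ ⟨J₂, j₂⟩ := by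
  obtain ⟨Eo, τ, q, hτ, hq, hfac⟩ := P.F_fac g₂
  obtain ⟨J, j, hJo⟩ := P.joinOn_exists f q hq
  have c₂ : P.IsJoin f g₂ j := isJoin_of_joinOn hτ hq hfac hJo
  have c₁ : P.IsJoin f g₁ j :=
    isJoin_of_joinOn (P.weq_comp hv hτ) hq (by rw [Category.assoc, hfac, hvg]) hJo
  exact (P.join_link h₁ c₁).trans (P.join_link c₂ h₂)

/-- Joins of weakly equivalent first inputs (over the base) are linked. -/
lemma join_link_f {A₁ A₂ Cc B J₁ J₂ : C} {f₁ : A₁ ⟶ B} {f₂ : A₂ ⟶ B} {g : Cc ⟶ B}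
    {j₁ : J₁ ⟶ B} {j₂ : J₂ ⟶ B} (u : A₁ ⟶ A₂) (hu : P.weq u) (huf : u ≫ f₂ = f₁)
    (h₁ : P.IsJoin f₁ g j₁) (h₂ : P.IsJoin f₂ g j₂) : P.ZigOver ⟨J₁, j₁⟩ ⟨J₂, j₂⟩ := by
  obtain ⟨Eo, τ, q, hτ, hq, hfac⟩ := P.F_fac g
  obtain ⟨E'₂, fbar₂, pbar₂, sq₂, hfp₂⟩ := P.pb_exists q f₂ hq
  obtain ⟨E'₁, fbar₁, pbar₁, sq₁, hfp₁⟩ := P.pb_exists q f₁ hq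
  have hcommρ : fbar₁ ≫ q = (pbar₁ ≫ u) ≫ f₂ := by
    rw [Category.assoc, huf]; exact sq₁.w
  set ρ' := sq₂.lift fbar₁ (pbar₁ ≫ u) hcommρ with hρ'
  have hsqρ : IsPullback pbar₁ ρ' u pbar₂ := by
    refine IsPullback.of_bot ?_ ?_ sq₂.flip
    · rw [sq₂.lift_fst, huf]; exact sq₁.flip
    · rw [sq₂.lift_snd]
  have hρ'w : P.weq ρ' := (P.pb_weq hfp₂ hsqρ.flip).1 hu
  obtain ⟨Z₂, i₂, σ₂, hi₂, hσ₂, hiσ₂⟩ := P.C_fac fbar₂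
  obtain ⟨Z₁, i₁, ς, hi₁, hς, hiς⟩ := P.C_fac (ρ' ≫ i₂)
  have hiσ₁ : i₁ ≫ ς ≫ σ₂ = fbar₁ := by
    rw [← Category.assoc, hiς, Category.assoc, hiσ₂, hρ', sq₂.lift_fst]
  -- the join of (f₁, g) built on this data
  obtain ⟨J₁', inlZ, inrA, hpoJ₁, hcofinrA⟩ := P.po_exists i₁ pbar₁ hi₁
  have hcomm₁ : i₁ ≫ (ς ≫ σ₂) ≫ q = pbar₁ ≫ f₁ := by
    rw [← Category.assoc, hiσ₁]; exact sq₁.w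
  set j₁' := hpoJ₁.desc ((ς ≫ σ₂) ≫ q) f₁ hcomm₁ with hj₁'
  have c₁ : P.IsJoin f₁ g j₁' :=
    ⟨Eo, τ, q, hτ, hq, hfac, E'₁, Z₁, fbar₁, pbar₁, i₁, ς ≫ σ₂, inrA, inlZ, sq₁, hi₁,
      P.weq_comp hς hσ₂, hiσ₁, hpoJ₁.flip, hpoJ₁.inr_desc _ _ _, hpoJ₁.inl_desc _ _ _⟩
  -- push forward along u
  obtain ⟨Q', inlJ, inrA₂, hpoQ, _⟩ := P.po_exists inrA u hcofinrA
  have hinlJw : P.weq inlJ := (P.po_weq hcofinrA hpoQ).1 hu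
  have hcommQ : inrA ≫ j₁' = u ≫ f₂ := by rw [hpoJ₁.inr_desc, huf]
  set jQ := hpoQ.desc j₁' f₂ hcommQ with hjQ
  have zigB : P.ZigOver ⟨J₁', j₁'⟩ ⟨Q', jQ⟩ :=
    zig_fwd inlJ hinlJw (hpoQ.inl_desc _ _ _)
  -- T-trick: Q' is a join of (f₂, g)
  obtain ⟨T, tZ, cT, hpoT, hcofcT⟩ := P.po_exists i₁ ρ' hi₁
  have htZw : P.weq tZ := (P.po_weq hi₁ hpoT).1 hρ'w
  set t := hpoT.desc ς i₂ hiς with ht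
  have htl : tZ ≫ t = ς := hpoT.inl_desc _ _ _
  have htr : cT ≫ t = i₂ := hpoT.inr_desc _ _ _
  have htw : P.weq t := P.weq_of_comp_right htZw (by rw [htl]; exact hς)
  have hcommω : i₁ ≫ inlZ ≫ inlJ = ρ' ≫ pbar₂ ≫ inrA₂ := by
    rw [← Category.assoc, hpoJ₁.w, Category.assoc, hpoQ.w, ← Category.assoc,
      ← Category.assoc, sq₂.lift_snd]
  set ω := hpoT.desc (inlZ ≫ inlJ) (pbar₂ ≫ inrA₂) hcommω with hω
  have hωl : tZ ≫ ω = inlZ ≫ inlJ := hpoT.inl_desc _ _ _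
  have hωr : cT ≫ ω = pbar₂ ≫ inrA₂ := hpoT.inr_desc _ _ _
  have big : IsPushout (pbar₁ ≫ u) i₁ inrA₂ (inlZ ≫ inlJ) :=
    IsPushout.paste_horiz hpoJ₁.flip hpoQ.flip
  have hpoQ₂ : IsPushout pbar₂ cT inrA₂ ω := by
    refine IsPushout.of_left ?_ hωr.symm hpoT.flip
    have e1 : ρ' ≫ pbar₂ = pbar₁ ≫ u := sq₂.lift_snd _ _ _
    rw [e1, hωl]
    exact big
  have hcTσ : cT ≫ t ≫ σ₂ = fbar₂ := by rw [← Category.assoc, htr, hiσ₂]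
  have hωjQ : ω ≫ jQ = (t ≫ σ₂) ≫ q := by
    refine hpoT.hom_ext ?_ ?_
    · rw [← Category.assoc, hωl, Category.assoc, hjQ, hpoQ.inl_desc, hj₁',
        hpoJ₁.inl_desc]
      simp only [← Category.assoc]
      rw [htl]
    · rw [← Category.assoc, hωr, Category.assoc, hjQ, hpoQ.inr_desc]
      simp only [← Category.assoc]
      rw [htr, hiσ₂, sq₂.w]
  have c₂ : P.IsJoin f₂ g jQ :=
    ⟨Eo, τ, q, hτ, hq, hfac, E'₂, T, fbar₂, pbar₂, cT, t ≫ σ₂, inrA₂, ω, sq₂, hcofcT,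
      P.weq_comp htw hσ₂, hcTσ, hpoQ₂, hpoQ.inr_desc _ _ _, hωjQ⟩
  exact ((P.join_link h₁ c₁).trans zigB).trans (P.join_link c₂ h₂)

/-- Joins along a zigzag of first inputs are linked. -/
lemma join_link_zig {B Cc : C} {g : Cc ⟶ B} {u v : (T : C) × (T ⟶ B)}
    (hzig : P.ZigOver u v) :
    ∀ {J₁ J₂ : C} {j₁ : J₁ ⟶ B} {j₂ : J₂ ⟶ B}, P.IsJoin u.2 g j₁ → P.IsJoin v.2 g j₂ →
      P.ZigOver ⟨J₁, j₁⟩ ⟨J₂, j₂⟩ := by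
  induction hzig with
  | rel x y h =>
    intro J₁ J₂ j₁ j₂ h₁ h₂
    obtain ⟨e, he, hej⟩ := h
    exact P.join_link_f e he hej h₁ h₂
  | refl x => intro J₁ J₂ j₁ j₂ h₁ h₂; exact P.join_link h₁ h₂
  | symm x y _ ih => intro J₁ J₂ j₁ j₂ h₁ h₂; exact (ih h₂ h₁).symm
  | trans x y z _ _ ih1 ih2 =>
    intro J₁ J₂ j₁ j₂ h₁ h₂
    obtain ⟨Jm, jm, hm⟩ := P.exists_join y.2 g
    exact (ih1 h₁ hm).trans (ih2 hm h₂)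

end PreJCat

end JoinAux


section PBAux

variable {C : Type u} [Category.{v} C] [HasZeroObject C] [HasZeroMorphisms C]

lemma IsBinProd.swap {X Y Pd : C} {p1 : Pd ⟶ X} {p2 : Pd ⟶ Y} (h : IsBinProd p1 p2) :
    IsBinProd p2 p1 :=
  isBinProd_of_isPullback h.isPullback.flip

/-- Induced maps between pullbacks along `Θ` of objects over the base form pullbacks. -/
lemma pb_map {PG PF X Y Xh Yh : C} {Θ : PG ⟶ PF} {x : X ⟶ PF} {y : Y ⟶ PF}
    {xh : Xh ⟶ PG} {ρX : Xh ⟶ X} {yh : Yh ⟶ PG} {ρY : Yh ⟶ Y}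
    (sqX : IsPullback xh ρX Θ x) (sqY : IsPullback yh ρY Θ y)
    {d : X ⟶ Y} (hd : d ≫ y = x) {dh : Xh ⟶ Yh}
    (h1 : dh ≫ yh = xh) (h2 : dh ≫ ρY = ρX ≫ d) : IsPullback dh ρX ρY d := by
  have s0 : IsPullback ρX (dh ≫ yh) (d ≫ y) Θ := by rw [h1, hd]; exact sqX.flip
  exact (IsPullback.of_bot s0 h2.symm sqY.flip).flip

/-- The pullback along `Θ` of a pullback square is a pullback square. -/
lemma pb_isPullback {PG PF Eo A W Eh Ah Wh : C} {Θ : PG ⟶ PF}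
    {p : Eo ⟶ PF} {f : A ⟶ PF} {u : W ⟶ Eo} {v : W ⟶ A}
    {ph : Eh ⟶ PG} {ρE : Eh ⟶ Eo} {fh : Ah ⟶ PG} {ρA : Ah ⟶ A} {wh : Wh ⟶ PG} {ρW : Wh ⟶ W}
    (sqE : IsPullback ph ρE Θ p) (sqA : IsPullback fh ρA Θ f)
    (sqW : IsPullback wh ρW Θ (u ≫ p)) (base : IsPullback u v p f)
    {uh : Wh ⟶ Eh} {vh : Wh ⟶ Ah}
    (hu1 : uh ≫ ph = wh) (hu2 : uh ≫ ρE = ρW ≫ u)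
    (hv1 : vh ≫ fh = wh) (hv2 : vh ≫ ρA = ρW ≫ v) :
    IsPullback uh vh ph fh := by
  have s₁ : IsPullback vh ρW ρA v := pb_map sqW sqA base.w.symm hv1 hv2
  have s2 : IsPullback (uh ≫ ρE) vh p (fh ≫ Θ) := by
    rw [hu2, sqA.w]
    exact IsPullback.paste_horiz s₁.flip base
  exact IsPullback.of_right s2 (by rw [hu1, hv1]) sqE.flip

namespace PreJCat

variable {P : PreJCat C}

lemma isHPB_of_isPullback {D A Cc B : C} {f' : D ⟶ Cc} {g' : D ⟶ A} {g : Cc ⟶ B}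
    {f : A ⟶ B} (h : IsPullback f' g' g f) (hg : P.fib g) : P.IsHPB f' g' g f :=
  ⟨h.w, Cc, 𝟙 _, g, P.weq_id _, hg, Category.id_comp g, D, f', g', h, 𝟙 _,
    P.weq_id _, by simp, by simp⟩

lemma isHPO_of_isPushout {A B Cc D : C} {f : A ⟶ B} {g : A ⟶ Cc} {i' : B ⟶ D}
    {j' : Cc ⟶ D} (h : IsPushout f g i' j') (hf : P.cofib f) : P.IsHPO f g i' j' :=
  ⟨h.w, B, f, 𝟙 _, hf, P.weq_id _, Category.comp_id f, D, i', j',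
    (by simpa using h), 𝟙 _, P.weq_id _, by simp, by simp⟩

/-- Fat wedges exist at all levels over an e-fibrant base. -/
lemma exists_fatWedge (P : PreJCat C) {E B : C} (hBe : P.EFibrant B) (p : E ⟶ B) :
    ∀ m : ℕ, ∃ (T Pw : C) (j : T ⟶ Pw) (Δ : B ⟶ Pw),
      P.IsFatWedge p m j Δ ∧ P.EFibrant Pw
  | 0 => ⟨E, B, p, 𝟙 B, IsFatWedge.zero, hBe⟩
  | (m + 1) => by
    obtain ⟨T, Pn, j, Δ, hfw, hPne⟩ := P.exists_fatWedge hBe p m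
    obtain ⟨Pn1, pr1, pr2, hP, _⟩ := P.exists_binProd Pn B hBe
    obtain ⟨TB, q1, q2, hTB, _⟩ := P.exists_binProd T B hBe
    obtain ⟨PE, r2, r1, hPE0, _⟩ := P.exists_binProd E Pn hPne
    have hPE := hPE0.swap
    obtain ⟨Tn1, j', hjoin⟩ := P.exists_join (hP.lift (q1 ≫ j) q2) (hP.lift r1 (r2 ≫ p))
    refine ⟨Tn1, Pn1, j', hP.lift Δ (𝟙 B),
      IsFatWedge.succ hfw hP hTB hPE ⟨hP.lift_fst _ _, hP.lift_snd _ _⟩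
        ⟨hP.lift_fst _ _, hP.lift_snd _ _⟩ hjoin ⟨hP.lift_fst _ _, hP.lift_snd _ _⟩,
      P.efibrant_binProd hP hPne hBe⟩

/-- Weak liftings transfer across a pullback of the base along a trivial fibration
admitting a compatible section at the level of the object. -/
lemma wl_transfer (hc : ∀ X : C, P.CofModel X) {G F : C} (θ : G ⟶ F) (s : F ⟶ G)
    (hs : s ≫ θ = 𝟙 F) {PwG PwF : C} {Θ : PwG ⟶ PwF} (hΘf : P.fib Θ) (hΘw : P.weq Θ)
    {TF Th : C} {jF : TF ⟶ PwF} {jh : Th ⟶ PwG} {ρ : Th ⟶ TF}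
    (sq : IsPullback jh ρ Θ jF)
    {ΔF : F ⟶ PwF} {ΔG : G ⟶ PwG} (hΔ : ΔG ≫ Θ = θ ≫ ΔF) :
    P.WeakLifting ΔF jF ↔ P.WeakLifting ΔG jh := by
  have hρw : P.weq ρ := (P.pb_weq hΘf sq).2 hΘw
  constructor
  · rintro ⟨E₁, τ₁, q₁, hτ₁, hq₁, hfac, s₁, hs₁⟩
    obtain ⟨X, fb, pb, sqX, hfpb⟩ := P.pb_exists q₁ Θ hq₁
    have hfbw : P.weq fb := (P.pb_weq hΘf sqX.flip).2 hΘw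
    have hcomm : (ρ ≫ τ₁) ≫ q₁ = jh ≫ Θ := by
      rw [Category.assoc, hfac, sq.w]
    set τh := sqX.lift (ρ ≫ τ₁) jh hcomm with hτh
    have hτhw : P.weq τh := P.weq_of_comp_left hfbw
      (by rw [hτh, sqX.lift_fst]; exact P.weq_comp hρw hτ₁)
    have hcomm2 : (θ ≫ s₁) ≫ q₁ = ΔG ≫ Θ := by
      rw [Category.assoc, hs₁, hΔ]
    exact ⟨X, τh, pb, hτhw, hfpb, sqX.lift_snd _ _ _,
      sqX.lift (θ ≫ s₁) ΔG hcomm2, sqX.lift_snd _ _ _⟩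
  · intro hwl
    obtain ⟨E₀, τ₀, q₀, hτ₀, hq₀, hfac₀⟩ := P.F_fac jF
    obtain ⟨X, xE, xq, sqX, hfxq⟩ := P.pb_exists q₀ Θ hq₀
    have hxEw : P.weq xE := (P.pb_weq hΘf sqX.flip).2 hΘw
    have hcomm : (ρ ≫ τ₀) ≫ q₀ = jh ≫ Θ := by rw [Category.assoc, hfac₀, sq.w]
    set z := sqX.lift (ρ ≫ τ₀) jh hcomm with hz
    have hzw : P.weq z := P.weq_of_comp_left hxEw
      (by rw [hz, sqX.lift_fst]; exact P.weq_comp hρw hτ₀)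
    obtain ⟨secX, hsecX⟩ := P.section_of_fact hc hwl z xq hzw hfxq (sqX.lift_snd _ _ _)
    refine ⟨E₀, τ₀, q₀, hτ₀, hq₀, hfac₀, s ≫ secX ≫ xE, ?_⟩
    rw [Category.assoc, Category.assoc, sqX.w, ← Category.assoc secX, hsecX,
      ← Category.assoc, Category.assoc s, hΔ, ← Category.assoc, hs, Category.id_comp]

end PreJCat

end PBAux


section ZigProd

variable {C : Type u} [Category.{v} C] [HasZeroObject C] [HasZeroMorphisms C]

namespace PreJCat

variable {P : PreJCat C}

/-- Crossing a zigzag over `Pn'` with an e-fibrant object `G` yields a zigzag over the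
product `Pn' × G`. -/
lemma zig_prod_G {G : C} (hGe : P.EFibrant G) {Pn' PwG : C} {pr1G : PwG ⟶ Pn'}
    {pr2G : PwG ⟶ G} (hPG : IsBinProd pr1G pr2G) {u v : (T : C) × (T ⟶ Pn')}
    (hzig : P.ZigOver u v) :
    ∀ {Wu Wv : C} {au : Wu ⟶ u.1} {bu : Wu ⟶ G} {av : Wv ⟶ v.1} {bv : Wv ⟶ G},
      IsBinProd au bu → IsBinProd av bv →
      P.ZigOver (⟨Wu, hPG.lift (au ≫ u.2) bu⟩ : (T : C) × (T ⟶ PwG))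
        ⟨Wv, hPG.lift (av ≫ v.2) bv⟩ := by
  induction hzig with
  | rel x y hstep =>
    intro Wu Wv au bu av bv hu hv
    obtain ⟨e, he, hej⟩ := hstep
    have hcomm : e ≫ y.2 = x.2 := hej
    set e' := hv.lift (au ≫ e) bu with he'
    have he'1 : e' ≫ av = au ≫ e := hv.lift_fst _ _
    have he'2 : e' ≫ bv = bu := hv.lift_snd _ _
    have hsq : IsPullback e' au av e := by
      refine IsPullback.of_right ?_ he'1 hv.swap.isPullback
      have h0 : e' ≫ bv = bu := he'2
      rw [h0]
      have h1 : e ≫ (0 : y.1 ⟶ 0) = (0 : x.1 ⟶ 0) := to_zero_eq _ _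
      rw [h1]
      exact hu.swap.isPullback
    have hfav : P.fib av := P.fib_fst_of_binProd hv hGe
    have he'w : P.weq e' := (P.pb_weq hfav hsq).1 he
    refine zig_fwd e' he'w (hPG.hom_ext ?_ ?_)
    · rw [Category.assoc, hPG.lift_fst, hPG.lift_fst, ← Category.assoc, he'1,
        Category.assoc, hcomm]
    · rw [Category.assoc, hPG.lift_snd, hPG.lift_snd, he'2]
  | refl x =>
    intro Wu Wv au bu av bv hu hv
    set ι := hu.isPullback.isoIsPullback _ _ hv.isPullback with hι
    refine zig_fwd ι.hom (P.weq_iso _) (hPG.hom_ext ?_ ?_)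
    · rw [Category.assoc, hPG.lift_fst, hPG.lift_fst, ← Category.assoc,
        IsPullback.isoIsPullback_hom_fst]
    · rw [Category.assoc, hPG.lift_snd, hPG.lift_snd, IsPullback.isoIsPullback_hom_snd]
  | symm x y _ ih =>
    intro Wu Wv au bu av bv hu hv
    exact (ih hv hu).symm
  | trans x y z _ _ ih1 ih2 =>
    intro Wu Wv au bu av bv hu hv
    obtain ⟨Wm, am, bm, hm, _⟩ := P.exists_binProd y.1 G hGe
    exact (ih1 hu hm).trans (ih2 hm hv)

end PreJCat

end ZigProd


section Monster

variable {C : Type u} [Category.{v} C] [HasZeroObject C] [HasZeroMorphisms C]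

namespace PreJCat

/-- The key comparison: the pullback along (a power of) a trivial fibration of any fat
wedge of `h ≫ θ` is zigzag-linked to any fat wedge of `h`. -/
lemma fatwedge_compare (P : PreJCat C)
    (cube : ∀ {X00 X01 X10 X11 Y00 Y01 Y10 Y11 : C}
      {tf : X00 ⟶ X01} {tg : X00 ⟶ X10} {ti : X01 ⟶ X11} {tj : X10 ⟶ X11}
      {bf : Y00 ⟶ Y01} {bg : Y00 ⟶ Y10} {bi : Y01 ⟶ Y11} {bj : Y10 ⟶ Y11}
      {v00 : X00 ⟶ Y00} {v01 : X01 ⟶ Y01} {v10 : X10 ⟶ Y10} {v11 : X11 ⟶ Y11},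
      tf ≫ ti = tg ≫ tj → P.IsHPO bf bg bi bj → P.IsHPB tf v00 v01 bf →
      P.IsHPB tg v00 v10 bg → P.IsHPB ti v01 v11 bi → P.IsHPB tj v10 v11 bj →
      P.IsHPO tf tg ti tj)
    {E G F : C} (h : E ⟶ G) (θ : G ⟶ F) (hθf : P.fib θ) (hθw : P.weq θ)
    (hGe : P.EFibrant G)
    {m : ℕ} {TF PwF : C} {jF : TF ⟶ PwF} {ΔF : F ⟶ PwF}
    (hF : P.IsFatWedge (h ≫ θ) m jF ΔF) :
    ∀ {TG PwG : C} {jG : TG ⟶ PwG} {ΔG : G ⟶ PwG}, P.IsFatWedge h m jG ΔG →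
      ∃ (Θ : PwG ⟶ PwF), P.fib Θ ∧ P.weq Θ ∧ ΔG ≫ Θ = θ ≫ ΔF ∧
        ∃ (Th : C) (jh : Th ⟶ PwG) (ρ : Th ⟶ TF), IsPullback jh ρ Θ jF ∧
          P.ZigOver ⟨Th, jh⟩ ⟨TG, jG⟩ := by
  induction hF with
  | zero =>
    intro TG PwG jG ΔG hG
    cases hG
    obtain ⟨Th, jh, ρ, sqTh, _⟩ := P.pb_exists θ (h ≫ θ) hθf
    have hρw : P.weq ρ := (P.pb_weq hθf sqTh).2 hθw
    have hcomm : h ≫ θ = (𝟙 E) ≫ h ≫ θ := by simp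
    set e := sqTh.lift h (𝟙 E) hcomm with he
    have hew : P.weq e := P.weq_of_comp_left hρw (by rw [he, sqTh.lift_snd]; exact P.weq_id _)
    exact ⟨θ, hθf, hθw, by simp, Th, jh, ρ, sqTh,
      zig_bwd e hew (sqTh.lift_fst _ _ _)⟩
  | @succ n T Pn j Δ hprev Pn1 pr1 pr2 hP TB q1 q2 hTB PE r1 r2 hPE jB hjB pP hpP
      Tn1 j' hjoin Δ' hΔ ih =>
    intro TG PwG jG ΔG hG
    cases hG with
    | @succ _ T' Pn' jGp ΔGp hprevG _ pr1G pr2G hPG TBG q1G q2G hTBG PEG r1G r2G hPEG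
        jBG hjBG pPG hpPG _ _ hjoinG _ hΔG =>
      obtain ⟨Θm, hΘmf, hΘmw, hΔm, Tm, jm, ρm, sqm, zigm⟩ := ih hprevG
      -- mixed product M = Pn ×₀ G and the map Θ = Θm × θ
      obtain ⟨M, m2, m1, sqM0, hfibm1⟩ := P.pb_exists (0 : G ⟶ 0) (0 : Pn ⟶ 0) hGe
      set ψ : PwG ⟶ M := sqM0.lift pr2G (pr1G ≫ Θm) (by simp) with hψ
      have hψ2 : ψ ≫ m2 = pr2G := sqM0.lift_fst _ _ _
      have hψ1 : ψ ≫ m1 = pr1G ≫ Θm := sqM0.lift_snd _ _ _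
      have sqA : IsPullback ψ pr1G m1 Θm := by
        refine IsPullback.of_right ?_ hψ1 sqM0
        rw [hψ2]
        have : Θm ≫ (0 : Pn ⟶ 0) = (0 : Pn' ⟶ 0) := to_zero_eq _ _
        rw [this]
        exact hPG.isPullback.flip
      have hψf : P.fib ψ := P.fib_snd_of_isPullback sqA.flip hΘmf
      have hψw : P.weq ψ := (P.pb_weq hΘmf sqA.flip).2 hΘmw
      set φ : M ⟶ Pn1 := hP.lift m1 (m2 ≫ θ) with hφ
      have hφ1 : φ ≫ pr1 = m1 := hP.lift_fst _ _
      have hφ2 : φ ≫ pr2 = m2 ≫ θ := hP.lift_snd _ _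
      have sqB : IsPullback φ m2 pr2 θ := by
        refine IsPullback.of_right ?_ hφ2 hP.isPullback
        rw [hφ1]
        have : θ ≫ (0 : F ⟶ 0) = (0 : G ⟶ 0) := to_zero_eq _ _
        rw [this]
        exact sqM0.flip
      have hφf : P.fib φ := P.fib_snd_of_isPullback sqB.flip hθf
      have hφw : P.weq φ := (P.pb_weq hθf sqB.flip).2 hθw
      set Θ : PwG ⟶ Pn1 := ψ ≫ φ with hΘ
      have hΘf : P.fib Θ := P.fib_comp hψf hφf
      have hΘw : P.weq Θ := P.weq_comp hψw hφw
      have hΘ1 : Θ ≫ pr1 = pr1G ≫ Θm := by rw [hΘ, Category.assoc, hφ1, hψ1]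
      have hΘ2 : Θ ≫ pr2 = pr2G ≫ θ := by
        rw [hΘ, Category.assoc, hφ2, ← Category.assoc, hψ2]
      have hΔcompat : ΔG ≫ Θ = θ ≫ Δ' := by
        refine hP.hom_ext ?_ ?_
        · rw [Category.assoc, hΘ1, ← Category.assoc, hΔG.1, hΔm, Category.assoc, hΔ.1]
        · rw [Category.assoc, hΘ2, ← Category.assoc, hΔG.2, Category.assoc, hΔ.2]
          simp
      -- pull everything back along Θ
      obtain ⟨Th, jh, ρh, sqTh, hfibρh⟩ := P.pb_exists Θ j' hΘf
      obtain ⟨TBh, jBh, ρB, sqTBh, hfibρB⟩ := P.pb_exists Θ jB hΘf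
      obtain ⟨PEh, pPh, ρPE, sqPEh, hfibρPE⟩ := P.pb_exists Θ pP hΘf
      obtain ⟨E₂, τ₂, q₂, hτ₂, hq₂, hfac₂, E', Z, fbar, pbar, iF, σF, aF, bzF, sqE',
        hiF, hσF, hiσF, hpoF, haF, hbzF⟩ := hjoin
      obtain ⟨E₂h, q₂h, ρE₂, sqE₂h, _⟩ := P.pb_exists Θ q₂ hΘf
      obtain ⟨Zh, zh, ρZ, sqZh, hfibρZ⟩ := P.pb_exists Θ (σF ≫ q₂) hΘf
      obtain ⟨E'h, eh, ρE', sqE'h, _⟩ := P.pb_exists Θ (fbar ≫ q₂) hΘf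
      have hρhw : P.weq ρh := (P.pb_weq hΘf sqTh).2 hΘw
      have hρBw : P.weq ρB := (P.pb_weq hΘf sqTBh).2 hΘw
      have hρPEw : P.weq ρPE := (P.pb_weq hΘf sqPEh).2 hΘw
      have hρE₂w : P.weq ρE₂ := (P.pb_weq hΘf sqE₂h).2 hΘw
      have hρZw : P.weq ρZ := (P.pb_weq hΘf sqZh).2 hΘw
      have hρE'w : P.weq ρE' := (P.pb_weq hΘf sqE'h).2 hΘw
      have hfq₂h : P.fib q₂h := P.fib_snd_of_isPullback sqE₂h.flip hq₂
      -- induced maps upstairs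
      have ctf : eh ≫ Θ = (ρE' ≫ iF) ≫ σF ≫ q₂ := by
        rw [sqE'h.w, ← hiσF]
        simp only [Category.assoc]
      set tf := sqZh.lift eh (ρE' ≫ iF) ctf with htf
      have ctg : eh ≫ Θ = (ρE' ≫ pbar) ≫ jB := by
        rw [sqE'h.w, sqE'.w]
        simp only [Category.assoc]
      set tg := sqTBh.lift eh (ρE' ≫ pbar) ctg with htg
      have cti : zh ≫ Θ = (ρZ ≫ bzF) ≫ j' := by
        rw [sqZh.w, Category.assoc, hbzF]
      set ti := sqTh.lift zh (ρZ ≫ bzF) cti with hti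
      have ctj : jBh ≫ Θ = (ρB ≫ aF) ≫ j' := by
        rw [sqTBh.w, Category.assoc, haF]
      set tj := sqTh.lift jBh (ρB ≫ aF) ctj with htj
      have cfb : eh ≫ Θ = (ρE' ≫ fbar) ≫ q₂ := by rw [sqE'h.w, Category.assoc]
      set fbarh := sqE₂h.lift eh (ρE' ≫ fbar) cfb with hfbarh
      have czσ : zh ≫ Θ = (ρZ ≫ σF) ≫ q₂ := by rw [sqZh.w, Category.assoc]
      set zσh := sqE₂h.lift zh (ρZ ≫ σF) czσ with hzσh
      have cτ₂ : pPh ≫ Θ = (ρPE ≫ τ₂) ≫ q₂ := by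
        rw [sqPEh.w, Category.assoc, hfac₂]
      set τ₂h := sqE₂h.lift pPh (ρPE ≫ τ₂) cτ₂ with hτ₂h
      have hzσhw : P.weq zσh := P.weq_of_comp_left hρE₂w
        (by rw [hzσh, sqE₂h.lift_snd]; exact P.weq_comp hρZw hσF)
      have hτ₂hw : P.weq τ₂h := P.weq_of_comp_left hρE₂w
        (by rw [hτ₂h, sqE₂h.lift_snd]; exact P.weq_comp hρPEw hτ₂)
      -- the pulled-back pullback square
      have sqE'big : IsPullback fbarh tg q₂h jBh :=
        pb_isPullback sqE₂h sqTBh sqE'h sqE' (sqE₂h.lift_fst _ _ _) (sqE₂h.lift_snd _ _ _)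
          (sqTBh.lift_fst _ _ _) (sqTBh.lift_snd _ _ _)
      -- the four homotopy pullback faces
      have face1 : IsPullback tf ρE' ρZ iF :=
        pb_map sqE'h sqZh (by rw [← Category.assoc, hiσF]) (sqZh.lift_fst _ _ _)
          (sqZh.lift_snd _ _ _)
      have face2 : IsPullback tg ρE' ρB pbar :=
        pb_map sqE'h sqTBh sqE'.w.symm (sqTBh.lift_fst _ _ _) (sqTBh.lift_snd _ _ _)
      have face3 : IsPullback ti ρZ ρh bzF :=
        pb_map sqZh sqTh hbzF (sqTh.lift_fst _ _ _) (sqTh.lift_snd _ _ _)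
      have face4 : IsPullback tj ρB ρh aF :=
        pb_map sqTBh sqTh haF (sqTh.lift_fst _ _ _) (sqTh.lift_snd _ _ _)
      have topcomm : tf ≫ ti = tg ≫ tj := by
        refine sqTh.hom_ext ?_ ?_
        · rw [Category.assoc, Category.assoc, hti, sqTh.lift_fst, htj, sqTh.lift_fst,
            htf, sqZh.lift_fst, htg, sqTBh.lift_fst]
        · have e1 : ti ≫ ρh = ρZ ≫ bzF := sqTh.lift_snd _ _ _
          have e2 : tj ≫ ρh = ρB ≫ aF := sqTh.lift_snd _ _ _
          have e3 : tf ≫ ρZ = ρE' ≫ iF := sqZh.lift_snd _ _ _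
          have e4 : tg ≫ ρB = ρE' ≫ pbar := sqTBh.lift_snd _ _ _
          simp only [Category.assoc]
          rw [e1, e2, ← Category.assoc, e3, ← Category.assoc, e4,
            Category.assoc, Category.assoc, hpoF.w]
      have hpoTop : P.IsHPO tf tg ti tj :=
        cube topcomm (P.isHPO_of_isPushout hpoF.flip hiF)
          (P.isHPB_of_isPullback face1 hfibρZ) (P.isHPB_of_isPullback face2 hfibρB)
          (P.isHPB_of_isPullback face3 hfibρh) (P.isHPB_of_isPullback face4 hfibρh)
      obtain ⟨-, Z₁, i₁, σ₁, hi₁, hσ₁, hiσ₁, Q, inl, inr, hpoQ, wq, hwq, hinl, hinr⟩ :=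
        hpoTop
      set jQ := wq ≫ jh with hjQ
      have cf : i₁ ≫ σ₁ ≫ zσh = fbarh := by
        have z1 : zσh ≫ q₂h = zh := sqE₂h.lift_fst _ _ _
        have f1 : fbarh ≫ q₂h = eh := sqE₂h.lift_fst _ _ _
        have t1 : tf ≫ zh = eh := sqZh.lift_fst _ _ _
        have z2 : zσh ≫ ρE₂ = ρZ ≫ σF := sqE₂h.lift_snd _ _ _
        have f2 : fbarh ≫ ρE₂ = ρE' ≫ fbar := sqE₂h.lift_snd _ _ _
        have t2 : tf ≫ ρZ = ρE' ≫ iF := sqZh.lift_snd _ _ _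
        refine sqE₂h.hom_ext ?_ ?_
        · simp only [Category.assoc]
          rw [z1, f1, ← Category.assoc, hiσ₁, t1]
        · simp only [Category.assoc]
          rw [z2, f2, ← hiσF]
          simp only [← Category.assoc]
          rw [hiσ₁, t2]
      have hjQa : inr ≫ jQ = jBh := by
        rw [hjQ, ← Category.assoc, hinr]
        exact sqTh.lift_fst _ _ _
      have hjQb : inl ≫ jQ = (σ₁ ≫ zσh) ≫ q₂h := by
        have eti : ti ≫ jh = zh := sqTh.lift_fst _ _ _
        have ez : zσh ≫ q₂h = zh := sqE₂h.lift_fst _ _ _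
        rw [hjQ, ← Category.assoc, hinl, Category.assoc, eti, Category.assoc, ez]
      have cJoin : P.IsJoin jBh pPh jQ :=
        ⟨E₂h, τ₂h, q₂h, hτ₂hw, hfq₂h, sqE₂h.lift_fst _ _ _, E'h, Z₁, fbarh, tg, i₁,
          σ₁ ≫ zσh, inr, inl, sqE'big, hi₁, P.weq_comp hσ₁ hzσhw, cf, hpoQ.flip,
          hjQa, hjQb⟩
      have zigQ : P.ZigOver ⟨Q, jQ⟩ ⟨Th, jh⟩ := zig_fwd wq hwq rfl
      -- link the pulled-back pP with the G-side pP
      set w₁ : PEG ⟶ PE := hPE.lift (r1G ≫ Θm) r2G with hw₁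
      have a1 : w₁ ≫ r2 = r2G := hPE.lift_snd _ _
      have hw₁pP : w₁ ≫ pP = pPG ≫ Θ := by
        refine hP.hom_ext ?_ ?_
        · rw [Category.assoc, hpP.1, hw₁, hPE.lift_fst, Category.assoc, hΘ1,
            ← Category.assoc, hpPG.1]
        · have a2 : (pPG ≫ Θ) ≫ pr2 = (r2G ≫ h) ≫ θ := by
            rw [Category.assoc, hΘ2, ← Category.assoc, hpPG.2]
          rw [Category.assoc, hpP.2, a2, ← Category.assoc, ← Category.assoc, a1]
      have sqw₁ : IsPullback r1G w₁ Θm r1 := by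
        refine IsPullback.of_bot ?_ ?_ hPE.isPullback
        · have e0 : Θm ≫ (0 : Pn ⟶ 0) = (0 : Pn' ⟶ 0) := to_zero_eq _ _
          rw [a1, e0]
          exact hPEG.isPullback
        · rw [hw₁, hPE.lift_fst]
      have hw₁w : P.weq w₁ := (P.pb_weq hΘmf sqw₁).2 hΘmw
      set v' := sqPEh.lift pPG w₁ hw₁pP.symm with hv'
      have hv'w : P.weq v' := P.weq_of_comp_left hρPEw
        (by rw [hv', sqPEh.lift_snd]; exact hw₁w)
      obtain ⟨J₂, j₂, hj₂⟩ := P.exists_join jBG pPh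
      have zig_g : P.ZigOver ⟨TG, jG⟩ ⟨J₂, j₂⟩ :=
        P.join_link_g v' hv'w (sqPEh.lift_fst _ _ _) hjoinG hj₂
      -- link the pulled-back jB with the G-side jB
      obtain ⟨Wu, au, bu, hWu0, _⟩ := P.exists_binProd Tm G hGe
      have zigm' := P.zig_prod_G hGe hPG zigm hWu0 hTBG
      have eform : hPG.lift (q1G ≫ jGp) q2G = jBG :=
        hPG.hom_ext (by rw [hPG.lift_fst, hjBG.1]) (by rw [hPG.lift_snd, hjBG.2])
      rw [eform] at zigm'
      -- the comparison map κ from the product to the pullback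
      obtain ⟨Wd, ad, bd, hWd, _⟩ := P.exists_binProd T G hGe
      set lam₁ : Wu ⟶ Wd := hWd.lift (au ≫ ρm) bu with hlam₁
      set lam₂ : Wd ⟶ TB := hTB.lift ad (bd ≫ θ) with hlam₂
      have hlam₁w : P.weq lam₁ := by
        have sqlam₁ : IsPullback lam₁ au ad ρm := by
          refine IsPullback.of_right ?_ (hWd.lift_fst _ _) hWd.swap.isPullback
          rw [hlam₁, hWd.lift_snd]
          have e1 : ρm ≫ (0 : T ⟶ 0) = (0 : Tm ⟶ 0) := to_zero_eq _ _
          rw [e1]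
          exact hWu0.swap.isPullback
        exact (P.pb_weq (P.fib_fst_of_binProd hWd hGe) sqlam₁).1
          ((P.pb_weq hΘmf sqm).2 hΘmw)
      have hlam₂w : P.weq lam₂ := by
        have sqlam₂ : IsPullback lam₂ bd q2 θ := by
          refine IsPullback.of_right ?_ (hTB.lift_snd _ _) hTB.isPullback
          rw [hlam₂, hTB.lift_fst]
          have e1 : θ ≫ (0 : F ⟶ 0) = (0 : G ⟶ 0) := to_zero_eq _ _
          rw [e1]
          exact hWd.isPullback
        exact (P.pb_weq hθf sqlam₂.flip).2 hθw
      have hκcomm : (hPG.lift (au ≫ jm) bu) ≫ Θ = ((lam₁ ≫ lam₂)) ≫ jB := by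
        refine hP.hom_ext ?_ ?_
        · have e1 : lam₂ ≫ q1 = ad := hTB.lift_fst _ _
          have e2 : lam₁ ≫ ad = au ≫ ρm := hWd.lift_fst _ _
          simp only [Category.assoc]
          rw [hΘ1, hjB.1, ← Category.assoc, hPG.lift_fst, ← Category.assoc lam₂ q1 j,
            e1, ← Category.assoc, e2, Category.assoc, Category.assoc, sqm.w]
        · have e1 : lam₂ ≫ q2 = bd ≫ θ := hTB.lift_snd _ _
          have e2 : lam₁ ≫ bd = bu := hWd.lift_snd _ _
          simp only [Category.assoc]
          rw [hΘ2, hjB.2, e1, ← Category.assoc, hPG.lift_snd, ← Category.assoc, e2]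
      set κ : Wu ⟶ TBh := sqTBh.lift (hPG.lift (au ≫ jm) bu) (lam₁ ≫ lam₂) hκcomm with hκ
      have hκw : P.weq κ := P.weq_of_comp_left hρBw
        (by rw [hκ, sqTBh.lift_snd]; exact P.weq_comp hlam₁w hlam₂w)
      have zigκ : P.ZigOver ⟨Wu, hPG.lift (au ≫ jm) bu⟩ ⟨TBh, jBh⟩ :=
        zig_fwd κ hκw (sqTBh.lift_fst _ _ _)
      have zigB : P.ZigOver ⟨TBh, jBh⟩ ⟨TBG, jBG⟩ := zigκ.symm.trans zigm'
      -- assemble the zigzag at level n+1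
      have zigJoin : P.ZigOver ⟨Q, jQ⟩ ⟨J₂, j₂⟩ :=
        P.join_link_zig (g := pPh) zigB cJoin hj₂
      exact ⟨Θ, hΘf, hΘw, hΔcompat, Th, jh, ρh, sqTh,
        (zigQ.symm.trans zigJoin).trans zig_g.symm⟩

end PreJCat

end Monster


section Final

variable {C : Type u} [Category.{v} C] [HasZeroObject C] [HasZeroMorphisms C]

namespace PreJCat

/-- `WsecatE` is invariant under composing with a trivial fibration between e-fibrant
codomains. -/
lemma wsecatE_eq (P : PreJCat C)
    (cube : ∀ {X00 X01 X10 X11 Y00 Y01 Y10 Y11 : C}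
      {tf : X00 ⟶ X01} {tg : X00 ⟶ X10} {ti : X01 ⟶ X11} {tj : X10 ⟶ X11}
      {bf : Y00 ⟶ Y01} {bg : Y00 ⟶ Y10} {bi : Y01 ⟶ Y11} {bj : Y10 ⟶ Y11}
      {v00 : X00 ⟶ Y00} {v01 : X01 ⟶ Y01} {v10 : X10 ⟶ Y10} {v11 : X11 ⟶ Y11},
      tf ≫ ti = tg ≫ tj → P.IsHPO bf bg bi bj → P.IsHPB tf v00 v01 bf →
      P.IsHPB tg v00 v10 bg → P.IsHPB ti v01 v11 bi → P.IsHPB tj v10 v11 bj →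
      P.IsHPO tf tg ti tj)
    (hc : ∀ X : C, P.CofModel X) {E G F : C} (h : E ⟶ G) (θ : G ⟶ F)
    (hθf : P.fib θ) (hθw : P.weq θ) (hGe : P.EFibrant G) (hFe : P.EFibrant F) :
    P.WsecatE (h ≫ θ) = P.WsecatE h := by
  obtain ⟨s, hs⟩ := hc F θ hθf hθw
  unfold WsecatE
  congr 1
  ext n
  simp only [Set.mem_setOf_eq]
  constructor
  · rintro ⟨m, rfl, TF, PwF, jF, ΔF, hfwF, hwlF⟩
    obtain ⟨TG, PwG, jG, ΔG, hfwG, -⟩ := P.exists_fatWedge hGe h m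
    obtain ⟨Θ, hΘf, hΘw, hΔ, Th, jh, ρ, sq, zig⟩ :=
      P.fatwedge_compare cube h θ hθf hθw hGe hfwF hfwG
    refine ⟨m, rfl, TG, PwG, jG, ΔG, hfwG, ?_⟩
    exact (P.zig_wl hc zig ΔG).mp ((P.wl_transfer hc θ s hs hΘf hΘw sq hΔ).mp hwlF)
  · rintro ⟨m, rfl, TG, PwG, jG, ΔG, hfwG, hwlG⟩
    obtain ⟨TF, PwF, jF, ΔF, hfwF, -⟩ := P.exists_fatWedge hFe (h ≫ θ) m
    obtain ⟨Θ, hΘf, hΘw, hΔ, Th, jh, ρ, sq, zig⟩ :=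
      P.fatwedge_compare cube h θ hθf hθw hGe hfwF hfwG
    refine ⟨m, rfl, TF, PwF, jF, ΔF, hfwF, ?_⟩
    exact (P.wl_transfer hc θ s hs hΘf hΘw sq hΔ).mpr ((P.zig_wl hc zig ΔG).mpr hwlG)

end PreJCat

end Final

/-- The definition of `Wsecat` via an F-factorization of the zero
morphism `B ⟶ 0` does not depend on the choice of F-factorization. -/
theorem WsecatE_independent_of_factorization (J : JCat C)
    (hc : ∀ X : C, J.toPreJCat.CofModel X)
    {E B : C} (p : E ⟶ B) {F F' : C} (τ : B ⟶ F) (τ' : B ⟶ F')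
    (hτ : J.toPreJCat.weq τ) (hF : J.toPreJCat.EFibrant F)
    (hτ' : J.toPreJCat.weq τ') (hF' : J.toPreJCat.EFibrant F') :
    J.toPreJCat.WsecatE (p ≫ τ) = J.toPreJCat.WsecatE (p ≫ τ') := by
  set P := J.toPreJCat with hP
  obtain ⟨Pd, fb, pb, hsq, hfibpb⟩ := P.pb_exists (0 : F ⟶ 0) (0 : F' ⟶ 0) hF
  have hfibfb : P.fib fb := P.fib_snd_of_isPullback hsq.flip hF'
  have hPde : P.EFibrant Pd := P.efibrant_of_fib_comp fb hfibfb hF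
  have hcomm : τ ≫ (0 : F ⟶ 0) = τ' ≫ (0 : F' ⟶ 0) := by simp
  set u := hsq.lift τ τ' hcomm with hu
  obtain ⟨G, w, π, hw, hπ, hfacu⟩ := P.F_fac u
  have hGe : P.EFibrant G := P.efibrant_of_fib_comp π hπ hPde
  have hθf : P.fib (π ≫ fb) := P.fib_comp hπ hfibfb
  have hθ'f : P.fib (π ≫ pb) := P.fib_comp hπ hfibpb
  have hwθ : w ≫ π ≫ fb = τ := by rw [← Category.assoc, hfacu, hu, hsq.lift_fst]
  have hwθ' : w ≫ π ≫ pb = τ' := by rw [← Category.assoc, hfacu, hu, hsq.lift_snd]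
  have hθw : P.weq (π ≫ fb) := P.weq_of_comp_right hw (by rw [hwθ]; exact hτ)
  have hθ'w : P.weq (π ≫ pb) := P.weq_of_comp_right hw (by rw [hwθ']; exact hτ')
  have e1 : p ≫ τ = (p ≫ w) ≫ π ≫ fb := by rw [Category.assoc, hwθ]
  have e2 : p ≫ τ' = (p ≫ w) ≫ π ≫ pb := by rw [Category.assoc, hwθ']
  rw [e1, e2,
    P.wsecatE_eq (fun hcm hpo h1 h2 h3 h4 => J.cube hcm hpo h1 h2 h3 h4) hc (p ≫ w)
      (π ≫ fb) hθf hθw hGe hF,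
    P.wsecatE_eq (fun hcm hpo h1 h2 h3 h4 => J.cube hcm hpo h1 h2 h3 h4) hc (p ≫ w)
      (π ≫ pb) hθ'f hθ'w hGe hF']
end

section
/- In a J-category, let p : E → B, p' : E' → B', and b : B → B' be morphisms such that E-E'-B'-B forms a weak pullback. Then secat(p) ≤ min{cat(b), secat(p')}. -/
open CategoryTheory CategoryTheory.Limits ZeroObject

universe v u v' u'

variable (C : Type u) [Category.{v} C] [HasZeroObject C] [HasZeroMorphisms C]

variable {C}

variable (C)

variable {C}

/-! ### Auxiliary machinery for the proof -/

set_option linter.unusedSectionVars false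

namespace JProofAux

open PreJCat

variable {C : Type u} [Category.{v} C] [HasZeroObject C] [HasZeroMorphisms C]
variable (P : PreJCat C)

lemma weq_id (X : C) : P.weq (𝟙 X) := (P.iso_triv_fib (𝟙 X) inferInstance).2

lemma weq_iso {X Y : C} (f : X ⟶ Y) [IsIso f] : P.weq f := (P.iso_triv_fib f inferInstance).2

lemma fib_iso {X Y : C} (f : X ⟶ Y) [IsIso f] : P.fib f := (P.iso_triv_fib f inferInstance).1

lemma cofib_iso {X Y : C} (f : X ⟶ Y) [IsIso f] : P.cofib f :=
  (P.iso_triv_cofib f inferInstance).1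

/-- Patching: in any pullback square, the leg opposite to a fibration is a fibration. -/
lemma fib_of_isPullback {Pq X Y Z : C} {fst : Pq ⟶ X} {snd : Pq ⟶ Y} {f : X ⟶ Z} {g : Y ⟶ Z}
    (h : IsPullback fst snd f g) (hf : P.fib f) : P.fib snd := by
  obtain ⟨Q, fb, pb, hQ, hfib⟩ := P.pb_exists f g hf
  have e : snd = (h.isoIsPullback _ _ hQ).hom ≫ pb := by
    rw [IsPullback.isoIsPullback_hom_snd]
  rw [e]
  exact P.fib_comp (fib_iso P _) hfib

/-- Patching: in any pushout square, the leg opposite to a cofibration is a cofibration. -/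
lemma cofib_of_isPushout {Z X Y Q : C} {f : Z ⟶ X} {g : Z ⟶ Y} {inl : X ⟶ Q} {inr : Y ⟶ Q}
    (h : IsPushout f g inl inr) (hf : P.cofib f) : P.cofib inr := by
  obtain ⟨Q', inl', inr', hQ, hcof⟩ := P.po_exists f g hf
  have e : inr = inr' ≫ (hQ.isoIsPushout _ _ h).hom := by
    rw [IsPushout.inr_isoIsPushout_hom]
  rw [e]
  exact P.cofib_comp hcof (cofib_iso P _)

/-- Cancellation: pullback along a composite (in the `f`-slot). -/
lemma pb_cancel {Pq Q X Y Z W : C} {A : Pq ⟶ X} {Bm : Pq ⟶ W} {f : X ⟶ Y} {g : Y ⟶ Z}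
    {c : W ⟶ Z} {D : Q ⟶ Y} {Em : Q ⟶ W}
    (big : IsPullback A Bm (f ≫ g) c) (right : IsPullback D Em g c)
    {mid : Pq ⟶ Q} (h1 : mid ≫ D = A ≫ f) (h2 : mid ≫ Em = Bm) :
    IsPullback A mid f D := by
  apply IsPullback.of_bot (v₂₁ := Em) (v₂₂ := g) (h₃₁ := c) ?_ h1.symm right
  rwa [h2]

/-- Cancellation: pushout along a composite (in the `g`-slot). -/
lemma po_cancel {A X Y Q Y₂ Q₂ : C} {f : A ⟶ X} {g : A ⟶ Y} {inl : X ⟶ Q} {inr : Y ⟶ Q}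
    {g₂ : Y ⟶ Y₂} {inl₂ : X ⟶ Q₂} {inr₂ : Y₂ ⟶ Q₂}
    (t : IsPushout f g inl inr) (big : IsPushout f (g ≫ g₂) inl₂ inr₂)
    {mid : Q ⟶ Q₂} (h1 : inr ≫ mid = g₂ ≫ inr₂) (h2 : inl ≫ mid = inl₂) :
    IsPushout inr g₂ mid inr₂ := by
  apply IsPushout.of_top (v₁₁ := g) (h₁₁ := f) ?_ h1 t
  rwa [h2]

/-- The key lifting lemma in the presence of cofibrant models. -/
lemma lift_lemma (hc : ∀ X : C, P.CofModel X) {J F F' Bb : C} {τ : J ⟶ F} {q : F ⟶ Bb}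
    {q' : F' ⟶ Bb} {v : J ⟶ F'} (hτ : P.weq τ) (hq' : P.fib q') (hcomm : τ ≫ q = v ≫ q') :
    ∃ ℓ : F ⟶ F', ℓ ≫ q' = q ∧ (P.weq v → P.weq ℓ) := by
  obtain ⟨W, fbW, pbW, hW, hfibpbW⟩ := P.pb_exists q' q hq'
  have hu : v ≫ q' = τ ≫ q := hcomm.symm
  set u := hW.lift v τ hu with hu_def
  have hu1 : u ≫ fbW = v := hW.lift_fst v τ hu
  have hu2 : u ≫ pbW = τ := hW.lift_snd v τ hu
  obtain ⟨S, α, γ, hα, hγ, hαγ⟩ := P.F_fac u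
  have hfib2 : P.fib (γ ≫ pbW) := P.fib_comp hγ hfibpbW
  have hweq2 : P.weq (γ ≫ pbW) := by
    refine P.weq_of_comp_right hα ?_
    rw [← Category.assoc, hαγ, hu2]; exact hτ
  obtain ⟨t, ht⟩ := hc F (γ ≫ pbW) hfib2 hweq2
  refine ⟨t ≫ γ ≫ fbW, ?_, ?_⟩
  · have : fbW ≫ q' = pbW ≫ q := hW.w
    calc (t ≫ γ ≫ fbW) ≫ q' = t ≫ γ ≫ (fbW ≫ q') := by simp [Category.assoc]
    _ = (t ≫ (γ ≫ pbW)) ≫ q := by rw [this]; simp [Category.assoc]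
    _ = q := by rw [ht, Category.id_comp]
  · intro hv
    have hwt : P.weq t := P.weq_of_comp_left hweq2 (by rw [ht]; exact weq_id P F)
    have hgf : P.weq (γ ≫ fbW) := by
      refine P.weq_of_comp_right hα ?_
      rw [← Category.assoc, hαγ, hu1]; exact hv
    simpa [Category.assoc] using P.weq_comp hwt hgf


/-- Precomposing a homotopy pullback square with a weak equivalence at the initial corner. -/
lemma hpb_precomp {D' D A Cc B : C} {e : D' ⟶ D} {f' : D ⟶ Cc} {g' : D ⟶ A} {g : Cc ⟶ B}
    {f : A ⟶ B} (he : P.weq e) (h : P.IsHPB f' g' g f) :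
    P.IsHPB (e ≫ f') (e ≫ g') g f := by
  obtain ⟨hcomm, Eh, τ, q, hτ, hq, hτq, Pt, pr1, pr2, hPt, w, hw, hw1, hw2⟩ := h
  exact ⟨by rw [Category.assoc, hcomm, Category.assoc], Eh, τ, q, hτ, hq, hτq,
    Pt, pr1, pr2, hPt, e ≫ w, P.weq_comp he hw,
    by rw [Category.assoc, hw1, Category.assoc],
    by rw [Category.assoc, hw2]⟩

/-- Shifting a weak equivalence from the top map into the right vertical of an hpb square. -/
lemma hpb_shift {D A Cc' Cc B : C} {x : D ⟶ Cc'} {y : Cc' ⟶ Cc} {g' : D ⟶ A} {g : Cc ⟶ B}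
    {f : A ⟶ B} (hy : P.weq y) (h : P.IsHPB (x ≫ y) g' g f) :
    P.IsHPB x g' (y ≫ g) f := by
  obtain ⟨hcomm, Eh, τ, q, hτ, hq, hτq, Pt, pr1, pr2, hPt, w, hw, hw1, hw2⟩ := h
  exact ⟨by rw [← Category.assoc, hcomm], Eh, y ≫ τ, q, P.weq_comp hy hτ, hq,
    by rw [Category.assoc, hτq], Pt, pr1, pr2, hPt, w, hw,
    by rw [hw1, Category.assoc], hw2⟩

/-- The strict pullback along `b` of a morphism of fibrations over `B'` is a
homotopy pullback square. -/
lemma hpb_paste {Bb B : C} {b : B ⟶ Bb} {X Y : C} {qX : X ⟶ Bb} {qY : Y ⟶ Bb} {m : X ⟶ Y}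
    (hqX : P.fib qX) (hqY : P.fib qY) (hm : m ≫ qY = qX)
    {PtX PtY : C} {fbX : PtX ⟶ X} {pbX : PtX ⟶ B} {fbY : PtY ⟶ Y} {pbY : PtY ⟶ B}
    (hX : IsPullback fbX pbX qX b) (hY : IsPullback fbY pbY qY b)
    {t : PtX ⟶ PtY} (ht1 : t ≫ fbY = fbX ≫ m) (ht2 : t ≫ pbY = pbX) :
    P.IsHPB t fbX fbY m := by
  obtain ⟨Bf, βw, βf, hβw, hβf, hβ⟩ := P.F_fac b
  obtain ⟨Ys, fbs, pbs, hYs, hfibpbs⟩ := P.pb_exists qY βf hqY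
  have hfibfbs : P.fib fbs := fib_of_isPullback P hYs.flip hβf
  have hYc : fbY ≫ qY = (pbY ≫ βw) ≫ βf := by
    rw [hY.w, ← hβ, Category.assoc]
  set τY := hYs.lift fbY (pbY ≫ βw) hYc with hτY_def
  have hτY1 : τY ≫ fbs = fbY := hYs.lift_fst _ _ _
  have hτY2 : τY ≫ pbs = pbY ≫ βw := hYs.lift_snd _ _ _
  have bigY : IsPullback pbY fbY (βw ≫ βf) qY := by
    have := hY.flip; rwa [← hβ] at this
  have hPBτY : IsPullback pbY τY βw pbs :=
    pb_cancel bigY hYs.flip hτY2 hτY1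
  have hweqτY : P.weq τY := (P.pb_weq hfibpbs hPBτY.flip).1 hβw
  obtain ⟨Pts, pr1s, pr2s, hPts, hfibpr2s⟩ := P.pb_exists fbs m hfibfbs
  have hwc : (t ≫ τY) ≫ fbs = fbX ≫ m := by rw [Category.assoc, hτY1, ht1]
  set w := hPts.lift (t ≫ τY) fbX hwc with hw_def
  have hw1 : w ≫ pr1s = t ≫ τY := hPts.lift_fst _ _ _
  have hw2 : w ≫ pr2s = fbX := hPts.lift_snd _ _ _
  -- C1 : Pts is the pullback of q_X along βf
  have C1 : IsPullback (pr1s ≫ pbs) pr2s βf qX := by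
    have := hPts.paste_horiz hYs.flip
    rwa [hm] at this
  have hfibρ : P.fib (pr1s ≫ pbs) := fib_of_isPullback P C1.flip hqX
  have bigX : IsPullback pbX fbX (βw ≫ βf) qX := by
    have := hX.flip; rwa [← hβ] at this
  have hPBw : IsPullback pbX w βw (pr1s ≫ pbs) := by
    refine pb_cancel bigX C1 ?_ hw2
    rw [← Category.assoc, hw1, Category.assoc, hτY2, ← Category.assoc, ht2]
  have hweqw : P.weq w := (P.pb_weq hfibρ hPBw.flip).1 hβw
  exact ⟨ht1, Ys, τY, fbs, hweqτY, hfibfbs, hτY1, Pts, pr1s, pr2s, hPts, w, hweqw, hw1, hw2⟩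


/-- One step of join monotonicity. -/
lemma join_mono_step (hc : ∀ X : C, P.CofModel X) {A₁ A₂ X₁ X₂ Bb : C}
    {g₁ : A₁ ⟶ Bb} {g₂ : A₂ ⟶ Bb} {ℓ : A₁ ⟶ A₂} (hℓ : ℓ ≫ g₂ = g₁)
    {f₁ : X₁ ⟶ Bb} {f₂ : X₂ ⟶ Bb} {d : X₁ ⟶ X₂} (hd : d ≫ f₂ = f₁)
    {J₁ : C} {j₁ : J₁ ⟶ Bb} (hj : P.IsJoin f₁ g₁ j₁) :
    ∃ (J₂ : C) (j₂ : J₂ ⟶ Bb) (Dm : J₁ ⟶ J₂), P.IsJoin f₂ g₂ j₂ ∧ Dm ≫ j₂ = j₁ := by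
  obtain ⟨E₁, τ₁, q₁, hτ₁, hq₁, hτq₁, P₁, Z₁, fbar₁, pbar₁, i₁, σ₁, a₁, bz₁,
    hPb₁, hci₁, hwσ₁, hiσ₁, hPo₁, ha₁, hbz₁⟩ := hj
  obtain ⟨E₂, τ₂, q₂, hτ₂, hq₂, hτq₂⟩ := P.F_fac g₂
  obtain ⟨mm, hm1, -⟩ := lift_lemma P hc hτ₁ hq₂
    (show τ₁ ≫ q₁ = (ℓ ≫ τ₂) ≫ q₂ by rw [hτq₁, ← hℓ, Category.assoc, hτq₂])
  obtain ⟨P₂, fbar₂, pbar₂, hPb₂, hfibpbar₂⟩ := P.pb_exists q₂ f₂ hq₂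
  have huc : (fbar₁ ≫ mm) ≫ q₂ = (pbar₁ ≫ d) ≫ f₂ := by
    rw [Category.assoc, hm1, hPb₁.w, Category.assoc, hd]
  set u := hPb₂.lift (fbar₁ ≫ mm) (pbar₁ ≫ d) huc with hu_def
  have hu1 : u ≫ fbar₂ = fbar₁ ≫ mm := hPb₂.lift_fst _ _ _
  have hu2 : u ≫ pbar₂ = pbar₁ ≫ d := hPb₂.lift_snd _ _ _
  obtain ⟨Q, inlQ, inrQ, hQ, hcinrQ⟩ := P.po_exists i₁ u hci₁
  have hφc : i₁ ≫ (σ₁ ≫ mm) = u ≫ fbar₂ := by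
    rw [← Category.assoc, hiσ₁, hu1]
  set φ := hQ.desc (σ₁ ≫ mm) fbar₂ hφc with hφ_def
  have hφ1 : inlQ ≫ φ = σ₁ ≫ mm := hQ.inl_desc _ _ _
  have hφ2 : inrQ ≫ φ = fbar₂ := hQ.inr_desc _ _ _
  obtain ⟨Z₂, iφ, σφ, hciφ, hwσφ, hiσφ⟩ := P.C_fac φ
  obtain ⟨J₂', inlJ, inrJ, hJ₂, -⟩ := P.po_exists (inrQ ≫ iφ) pbar₂ (P.cofib_comp hcinrQ hciφ)
  have hi₂σ₂ : (inrQ ≫ iφ) ≫ σφ = fbar₂ := by rw [Category.assoc, hiσφ, hφ2]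
  have hj₂c : pbar₂ ≫ f₂ = (inrQ ≫ iφ) ≫ (σφ ≫ q₂) := by
    rw [← Category.assoc, hi₂σ₂, hPb₂.w]
  set j₂ := hJ₂.flip.desc f₂ (σφ ≫ q₂) hj₂c with hj₂_def
  have hj₂1 : inrJ ≫ j₂ = f₂ := hJ₂.flip.inl_desc _ _ _
  have hj₂2 : inlJ ≫ j₂ = σφ ≫ q₂ := hJ₂.flip.inr_desc _ _ _
  have hDc : pbar₁ ≫ (d ≫ inrJ) = i₁ ≫ (inlQ ≫ iφ ≫ inlJ) := by
    calc pbar₁ ≫ d ≫ inrJ = (pbar₁ ≫ d) ≫ inrJ := by rw [Category.assoc]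
    _ = (u ≫ pbar₂) ≫ inrJ := by rw [hu2]
    _ = u ≫ (inrQ ≫ iφ) ≫ inlJ := by rw [Category.assoc, ← hJ₂.w]
    _ = (u ≫ inrQ) ≫ iφ ≫ inlJ := by simp only [Category.assoc]
    _ = (i₁ ≫ inlQ) ≫ iφ ≫ inlJ := by rw [← hQ.w]
    _ = i₁ ≫ inlQ ≫ iφ ≫ inlJ := by simp only [Category.assoc]
  set Dm := hPo₁.desc (d ≫ inrJ) (inlQ ≫ iφ ≫ inlJ) hDc with hDm_def
  refine ⟨J₂', j₂, Dm, ⟨E₂, τ₂, q₂, hτ₂, hq₂, hτq₂, P₂, Z₂, fbar₂, pbar₂, inrQ ≫ iφ, σφ,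
    inrJ, inlJ, hPb₂, P.cofib_comp hcinrQ hciφ, hwσφ, hi₂σ₂, hJ₂.flip, hj₂1, hj₂2⟩, ?_⟩
  apply hPo₁.hom_ext
  · rw [← Category.assoc, hPo₁.inl_desc, Category.assoc, hj₂1, hd, ha₁]
  · rw [← Category.assoc, hPo₁.inr_desc, Category.assoc, Category.assoc, hj₂2, hbz₁]
    calc inlQ ≫ iφ ≫ σφ ≫ q₂ = inlQ ≫ (iφ ≫ σφ) ≫ q₂ := by simp only [Category.assoc]
    _ = (inlQ ≫ φ) ≫ q₂ := by rw [hiσφ, Category.assoc]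
    _ = σ₁ ≫ mm ≫ q₂ := by rw [hφ1, Category.assoc]
    _ = σ₁ ≫ q₁ := by rw [hm1]

/-- Join monotonicity, iterated. -/
lemma join_mono (hc : ∀ X : C, P.CofModel X) {A₁ A₂ Bb : C} {g₁ : A₁ ⟶ Bb} {g₂ : A₂ ⟶ Bb}
    (ℓ : A₁ ⟶ A₂) (hℓ : ℓ ≫ g₂ = g₁) {n : ℕ} {X₁ : C} {h₁ : X₁ ⟶ Bb}
    (hit : P.IsIterJoin g₁ n h₁) :
    ∃ (X₂ : C) (h₂ : X₂ ⟶ Bb) (d : X₁ ⟶ X₂), P.IsIterJoin g₂ n h₂ ∧ d ≫ h₂ = h₁ := by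
  induction hit with
  | zero => exact ⟨A₂, g₂, ℓ, IsIterJoin.zero, hℓ⟩
  | succ hprev hjoin ih =>
    obtain ⟨X₂, h₂, d, hit₂, hd⟩ := ih
    obtain ⟨J₂, j₂, Dm, hj₂, hDm⟩ := join_mono_step P hc hℓ hd hjoin
    exact ⟨J₂, j₂, Dm, IsIterJoin.succ hit₂ hj₂, hDm⟩

/-- Weak liftings transfer along maps over the base. -/
lemma weakLifting_of_map (hc : ∀ X : C, P.CofModel X) {B Bb X₁ X₂ : C} {b : B ⟶ Bb}
    {h₁ : X₁ ⟶ Bb} {h₂ : X₂ ⟶ Bb} (d : X₁ ⟶ X₂) (hd : d ≫ h₂ = h₁)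
    (hwl : P.WeakLifting b h₁) : P.WeakLifting b h₂ := by
  obtain ⟨Es, τs, qs, hτs, hqs, hτqs, s, hs⟩ := hwl
  obtain ⟨F₂, τ₂, q₂, hτ₂, hq₂, hτq₂⟩ := P.F_fac h₂
  obtain ⟨ℓ, hℓ1, -⟩ := lift_lemma P hc hτs hq₂
    (show τs ≫ qs = (d ≫ τ₂) ≫ q₂ by rw [hτqs, ← hd, Category.assoc, hτq₂])
  exact ⟨F₂, τ₂, q₂, hτ₂, hq₂, hτq₂, s ≫ ℓ, by rw [Category.assoc, hℓ1, hs]⟩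


/-- The join theorem: the iterated joins of `p` are weak pullbacks of the iterated
joins of `p'` along `b`. -/
lemma star (hc : ∀ X : C, P.CofModel X)
    (hcube : ∀ {X00 X01 X10 X11 Y00 Y01 Y10 Y11 : C}
      {tf : X00 ⟶ X01} {tg : X00 ⟶ X10} {ti : X01 ⟶ X11} {tj : X10 ⟶ X11}
      {bf : Y00 ⟶ Y01} {bg : Y00 ⟶ Y10} {bi : Y01 ⟶ Y11} {bj : Y10 ⟶ Y11}
      {v00 : X00 ⟶ Y00} {v01 : X01 ⟶ Y01} {v10 : X10 ⟶ Y10} {v11 : X11 ⟶ Y11},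
      tf ≫ ti = tg ≫ tj → P.IsHPO bf bg bi bj → P.IsHPB tf v00 v01 bf →
      P.IsHPB tg v00 v10 bg → P.IsHPB ti v01 v11 bi → P.IsHPB tj v10 v11 bj →
      P.IsHPO tf tg ti tj)
    {E B E' B' : C} (p : E ⟶ B) (p' : E' ⟶ B') (b : B ⟶ B')
    {E₀ : C} {q₀ : E₀ ⟶ B'} {τ₀ : E' ⟶ E₀}
    (hq₀ : P.fib q₀) (hτ₀ : P.weq τ₀) (hτq₀ : τ₀ ≫ q₀ = p')
    {Pt₀ : C} {pr1₀ : Pt₀ ⟶ E₀} {pr2₀ : Pt₀ ⟶ B}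
    (hPt₀ : IsPullback pr1₀ pr2₀ q₀ b) (hf₀ : P.fib pr2₀)
    {w₀ : E ⟶ Pt₀} (hw₀ : P.weq w₀) (hwp₀ : w₀ ≫ pr2₀ = p)
    {m : ℕ} {W : C} {h'' : W ⟶ B'} (hiter : P.IsIterJoin p' m h'') :
    ∃ (K : C) (k : K ⟶ B), P.IsIterJoin p m k ∧
    ∃ (F : C) (τn : W ⟶ F) (qn : F ⟶ B'), P.weq τn ∧ P.fib qn ∧ τn ≫ qn = h'' ∧
    ∃ (Pt : C) (fbn : Pt ⟶ F) (pbn : Pt ⟶ B), IsPullback fbn pbn qn b ∧ P.fib pbn ∧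
    ∃ (wn : K ⟶ Pt), P.weq wn ∧ wn ≫ pbn = k := by
  induction hiter with
  | zero =>
    exact ⟨E, p, IsIterJoin.zero, E₀, τ₀, q₀, hτ₀, hq₀, hτq₀, Pt₀, pr1₀, pr2₀, hPt₀, hf₀,
      w₀, hw₀, hwp₀⟩
  | @succ n X Y h h'' hprev hjoin ih =>
    obtain ⟨K, k, hiterK, F, τn, qn, hτn, hqn, hτqn, Ptn, fbn, pbn, hPtn, hfpbn,
      wn, hwn, hwnk⟩ := ih
    obtain ⟨Eq, τ', q', hτ', hq', hτq', Pc, Zc, fbar', pbar', i', σ', a', bz',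
      hPb', hci', hwσ', hiσ', hPo', ha', hbz'⟩ := hjoin
    -- (1) comparison of the two fibrant replacements of p'
    obtain ⟨ℓ', hℓ'1, hℓ'w⟩ := lift_lemma P hc hτ' hq₀
      (show τ' ≫ q' = τ₀ ≫ q₀ by rw [hτq', hτq₀])
    have hwℓ' : P.weq ℓ' := hℓ'w hτ₀
    -- (2) the fibrant replacement PF of the pullback Pc
    obtain ⟨PF, α₀, β, hPF, hfibβ⟩ := P.pb_exists q₀ qn hq₀
    have hfibα₀ : P.fib α₀ := fib_of_isPullback P hPF.flip hqn
    have hfibqP : P.fib (β ≫ qn) := P.fib_comp hfibβ hqn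
    -- (3)-(6) the weak equivalence v_P from Pc to PF
    obtain ⟨PF', α', β', hPF', hfibβ'⟩ := P.pb_exists q' qn hq'
    have htmc : (α' ≫ ℓ') ≫ q₀ = β' ≫ qn := by rw [Category.assoc, hℓ'1, hPF'.w]
    set tm := hPF.lift (α' ≫ ℓ') β' htmc with htm_def
    have htm1 : tm ≫ α₀ = α' ≫ ℓ' := hPF.lift_fst _ _ _
    have htm2 : tm ≫ β = β' := hPF.lift_snd _ _ _
    have bigPF' : IsPullback α' β' (ℓ' ≫ q₀) qn := by rw [hℓ'1]; exact hPF'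
    have sq4 : IsPullback α' tm ℓ' α₀ := pb_cancel bigPF' hPF htm1 htm2
    have hweqtm : P.weq tm := (P.pb_weq hfibα₀ sq4.flip).1 hwℓ'
    have hvP'c : fbar' ≫ q' = (pbar' ≫ τn) ≫ qn := by
      rw [hPb'.w, ← hτqn, Category.assoc]
    set vP' := hPF'.lift fbar' (pbar' ≫ τn) hvP'c with hvP'_def
    have hvP'1 : vP' ≫ α' = fbar' := hPF'.lift_fst _ _ _
    have hvP'2 : vP' ≫ β' = pbar' ≫ τn := hPF'.lift_snd _ _ _
    have bigPb' : IsPullback pbar' fbar' (τn ≫ qn) q' := by rw [hτqn]; exact hPb'.flip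
    have sq5 : IsPullback pbar' vP' τn β' := pb_cancel bigPb' hPF'.flip hvP'2 hvP'1
    have hweqvP' : P.weq vP' := (P.pb_weq hfibβ' sq5.flip).1 hτn
    set vP := vP' ≫ tm with hvP_def
    have hweqvP : P.weq vP := P.weq_comp hweqvP' hweqtm
    have hvP1 : vP ≫ α₀ = fbar' ≫ ℓ' := by
      rw [hvP_def, Category.assoc, htm1, ← Category.assoc, hvP'1]
    have hvP2 : vP ≫ β = pbar' ≫ τn := by
      rw [hvP_def, Category.assoc, htm2, hvP'2]
    -- (7) the pushout QZ
    obtain ⟨QZ, inlZ, inrZ, hQZ, hcinrZ⟩ := P.po_exists i' vP hci'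
    have hweqinlZ : P.weq inlZ := (P.po_weq hci' hQZ).1 hweqvP
    -- (8) the map η
    have hηc : i' ≫ (σ' ≫ ℓ') = vP ≫ α₀ := by
      rw [← Category.assoc, hiσ', hvP1]
    set η := hQZ.desc (σ' ≫ ℓ') α₀ hηc with hη_def
    have hη1 : inlZ ≫ η = σ' ≫ ℓ' := hQZ.inl_desc _ _ _
    have hη2 : inrZ ≫ η = α₀ := hQZ.inr_desc _ _ _
    have hweqη : P.weq η :=
      P.weq_of_comp_right hweqinlZ (by rw [hη1]; exact P.weq_comp hwσ' hwℓ')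
    -- (9)-(10) the pushout R and its fibrant replacement F₁
    obtain ⟨R, inlR, inrR, hR, hcinrR⟩ := P.po_exists inrZ β hcinrZ
    have hqRc : inrZ ≫ (η ≫ q₀) = β ≫ qn := by
      rw [← Category.assoc, hη2, hPF.w]
    set qR := hR.desc (η ≫ q₀) qn hqRc with hqR_def
    have hqR1 : inlR ≫ qR = η ≫ q₀ := hR.inl_desc _ _ _
    have hqR2 : inrR ≫ qR = qn := hR.inr_desc _ _ _
    obtain ⟨F₁, ρ, q₁, hwρ, hfq₁, hρq₁⟩ := P.F_fac qR
    set ma := inrR ≫ ρ with hma_def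
    set mQZ := inlR ≫ ρ with hmQZ_def
    have hma : ma ≫ q₁ = qn := by rw [hma_def, Category.assoc, hρq₁, hqR2]
    have hmQZq : mQZ ≫ q₁ = η ≫ q₀ := by rw [hmQZ_def, Category.assoc, hρq₁, hqR1]
    -- (11)-(14) the Z-corner of the fibrant square
    obtain ⟨Wp, πE, πF, hWp, hfπF⟩ := P.pb_exists q₀ q₁ hq₀
    have hfπE : P.fib πE := fib_of_isPullback P hWp.flip hfq₁
    set κ := hWp.lift η mQZ hmQZq.symm with hκ_def
    have hκ1 : κ ≫ πE = η := hWp.lift_fst _ _ _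
    have hκ2 : κ ≫ πF = mQZ := hWp.lift_snd _ _ _
    obtain ⟨FZ, θ, γ, hwθ, hfγ, hθγ⟩ := P.F_fac κ
    set eh := γ ≫ πE with heh_def
    have hfeh : P.fib eh := P.fib_comp hfγ hfπE
    have hweqeh : P.weq eh := by
      refine P.weq_of_comp_right hwθ ?_
      rw [heh_def, ← Category.assoc, hθγ, hκ1]; exact hweqη
    set mb := γ ≫ πF with hmb_def
    have hfmb : P.fib mb := P.fib_comp hfγ hfπF
    set mi := inrZ ≫ θ with hmi_def
    have hfqZ : P.fib (mb ≫ q₁) := P.fib_comp hfmb hfq₁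
    have hθmb : θ ≫ mb = mQZ := by rw [hmb_def, ← Category.assoc, hθγ, hκ2]
    have hθeh : θ ≫ eh = η := by rw [heh_def, ← Category.assoc, hθγ, hκ1]
    have hmieh : mi ≫ eh = α₀ := by rw [hmi_def, Category.assoc, hθeh, hη2]
    have hsq : mi ≫ mb = β ≫ ma := by
      rw [hmi_def, Category.assoc, hθmb, hmQZ_def, hma_def, ← Category.assoc, hR.w,
        Category.assoc]
    have hehq₀ : eh ≫ q₀ = mb ≫ q₁ := by
      rw [heh_def, hmb_def, Category.assoc, Category.assoc, hWp.w]
    have hmiqZ : mi ≫ (mb ≫ q₁) = β ≫ qn := by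
      rw [← Category.assoc, hsq, Category.assoc, hma]
    -- (15)-(17) the comparison τ₁ for the new join downstairs
    have hτ₁c : pbar' ≫ (τn ≫ ma) = i' ≫ (inlZ ≫ θ ≫ mb) := by
      calc pbar' ≫ τn ≫ ma = (pbar' ≫ τn) ≫ ma := by rw [Category.assoc]
      _ = (vP ≫ β) ≫ ma := by rw [hvP2]
      _ = vP ≫ mi ≫ mb := by rw [Category.assoc, hsq]
      _ = (vP ≫ inrZ) ≫ θ ≫ mb := by rw [hmi_def]; simp only [Category.assoc]
      _ = (i' ≫ inlZ) ≫ θ ≫ mb := by rw [← hQZ.w]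
      _ = i' ≫ inlZ ≫ θ ≫ mb := by simp only [Category.assoc]
    set τ₁ := hPo'.desc (τn ≫ ma) (inlZ ≫ θ ≫ mb) hτ₁c with hτ₁_def
    have hτ₁a : a' ≫ τ₁ = τn ≫ ma := hPo'.inl_desc _ _ _
    have hτ₁b : bz' ≫ τ₁ = inlZ ≫ θ ≫ mb := hPo'.inr_desc _ _ _
    have hτ₁q₁ : τ₁ ≫ q₁ = h'' := by
      apply hPo'.hom_ext
      · rw [← Category.assoc, hτ₁a, Category.assoc, hma, hτqn, ha']
      · rw [← Category.assoc, hτ₁b, hbz']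
        calc (inlZ ≫ θ ≫ mb) ≫ q₁ = inlZ ≫ (θ ≫ mb) ≫ q₁ := by simp only [Category.assoc]
        _ = inlZ ≫ η ≫ q₀ := by rw [hθmb, hmQZq]
        _ = (inlZ ≫ η) ≫ q₀ := by rw [Category.assoc]
        _ = (σ' ≫ ℓ') ≫ q₀ := by rw [hη1]
        _ = σ' ≫ q' := by rw [Category.assoc, hℓ'1]
    have hgsc : pbar' ≫ (τn ≫ inrR) = i' ≫ (inlZ ≫ inlR) := by
      calc pbar' ≫ τn ≫ inrR = (pbar' ≫ τn) ≫ inrR := by rw [Category.assoc]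
      _ = (vP ≫ β) ≫ inrR := by rw [hvP2]
      _ = (vP ≫ inrZ) ≫ inlR := by rw [Category.assoc, ← hR.w]; simp only [Category.assoc]
      _ = (i' ≫ inlZ) ≫ inlR := by rw [← hQZ.w]
      _ = i' ≫ inlZ ≫ inlR := by simp only [Category.assoc]
    set gs := hPo'.desc (τn ≫ inrR) (inlZ ≫ inlR) hgsc with hgs_def
    have hgs1 : a' ≫ gs = τn ≫ inrR := hPo'.inl_desc _ _ _
    have hgs2 : bz' ≫ gs = inlZ ≫ inlR := hPo'.inr_desc _ _ _
    have big17 : IsPushout i' (pbar' ≫ τn) (inlZ ≫ inlR) inrR := by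
      rw [← hvP2]; exact hQZ.paste_vert hR
    have sq17 : IsPushout a' τn gs inrR := po_cancel hPo'.flip big17 hgs1 hgs2
    have hca' : P.cofib a' := cofib_of_isPushout P hPo'.flip hci'
    have hweqgs : P.weq gs := (P.po_weq hca' sq17).1 hτn
    have hτ₁gs : τ₁ = gs ≫ ρ := by
      apply hPo'.hom_ext
      · rw [hτ₁a, (Category.assoc a' gs ρ).symm, hgs1, Category.assoc, ← hma_def]
      · rw [hτ₁b, (Category.assoc bz' gs ρ).symm, hgs2, Category.assoc, ← hmQZ_def, ← hθmb]
    have hweqτ₁ : P.weq τ₁ := by rw [hτ₁gs]; exact P.weq_comp hweqgs hwρ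
    -- (18)-(19) the pullbacks along b and the top maps
    obtain ⟨PtP, fbP, pbP, hPtP, hfpbP⟩ := P.pb_exists (β ≫ qn) b hfibqP
    obtain ⟨PtZ, fbZ, pbZ, hPtZ, hfpbZ⟩ := P.pb_exists (mb ≫ q₁) b hfqZ
    obtain ⟨Pt₁, fb₁, pb₁, hPt₁, hfpb₁⟩ := P.pb_exists q₁ b hfq₁
    have htf₀c : (fbP ≫ mi) ≫ (mb ≫ q₁) = pbP ≫ b := by
      rw [Category.assoc, hmiqZ, hPtP.w]
    set tf₀ := hPtZ.lift (fbP ≫ mi) pbP htf₀c with htf₀_def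
    have htf₀1 : tf₀ ≫ fbZ = fbP ≫ mi := hPtZ.lift_fst _ _ _
    have htf₀2 : tf₀ ≫ pbZ = pbP := hPtZ.lift_snd _ _ _
    have htg₀c : (fbP ≫ β) ≫ qn = pbP ≫ b := by
      rw [Category.assoc]; exact hPtP.w
    set tg₀ := hPtn.lift (fbP ≫ β) pbP htg₀c with htg₀_def
    have htg₀1 : tg₀ ≫ fbn = fbP ≫ β := hPtn.lift_fst _ _ _
    have htg₀2 : tg₀ ≫ pbn = pbP := hPtn.lift_snd _ _ _
    have hti₀c : (fbZ ≫ mb) ≫ q₁ = pbZ ≫ b := by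
      rw [Category.assoc, hPtZ.w]
    set ti₀ := hPt₁.lift (fbZ ≫ mb) pbZ hti₀c with hti₀_def
    have hti₀1 : ti₀ ≫ fb₁ = fbZ ≫ mb := hPt₁.lift_fst _ _ _
    have hti₀2 : ti₀ ≫ pb₁ = pbZ := hPt₁.lift_snd _ _ _
    have htj₀c : (fbn ≫ ma) ≫ q₁ = pbn ≫ b := by
      rw [Category.assoc, hma, hPtn.w]
    set tj₀ := hPt₁.lift (fbn ≫ ma) pbn htj₀c with htj₀_def
    have htj₀1 : tj₀ ≫ fb₁ = fbn ≫ ma := hPt₁.lift_fst _ _ _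
    have htj₀2 : tj₀ ≫ pb₁ = pbn := hPt₁.lift_snd _ _ _
    -- (20) the four vertical faces at the level of the strict pullbacks
    have facef : P.IsHPB tf₀ fbP fbZ mi :=
      hpb_paste P hfibqP hfqZ hmiqZ hPtP hPtZ htf₀1 htf₀2
    have faceg : P.IsHPB tg₀ fbP fbn β :=
      hpb_paste P hfibqP hqn rfl hPtP hPtn htg₀1 htg₀2
    have facei : P.IsHPB ti₀ fbZ fb₁ mb :=
      hpb_paste P hfqZ hfq₁ rfl hPtZ hPt₁ hti₀1 hti₀2
    have facej : P.IsHPB tj₀ fbn fb₁ ma :=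
      hpb_paste P hqn hfq₁ hma hPtn hPt₁ htj₀1 htj₀2
    -- (21) the pullback presentation G of PtP over Pt₀ and Ptn
    have huEc : (fbP ≫ α₀) ≫ q₀ = pbP ≫ b := by
      rw [Category.assoc, hPF.w]; exact hPtP.w
    set uE := hPt₀.lift (fbP ≫ α₀) pbP huEc with huE_def
    have huE1 : uE ≫ pr1₀ = fbP ≫ α₀ := hPt₀.lift_fst _ _ _
    have huE2 : uE ≫ pr2₀ = pbP := hPt₀.lift_snd _ _ _
    have G2 : IsPullback fbP tg₀ β fbn := pb_cancel hPtP hPtn htg₀1 htg₀2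
    have big21 : IsPullback (fbP ≫ α₀) tg₀ q₀ (pbn ≫ b) := by
      have h1 := G2.paste_horiz hPF
      rwa [hPtn.w] at h1
    have Gflip : IsPullback tg₀ uE pbn pr2₀ :=
      pb_cancel big21.flip hPt₀.flip (by rw [huE2, htg₀2]) huE1
    have G : IsPullback uE tg₀ pr2₀ pbn := Gflip.flip
    have hfibtg₀ : P.fib tg₀ := fib_of_isPullback P G hf₀
    -- (22) the pullback D of pr2₀ along k, and the weak equivalence dw
    obtain ⟨Dd, fbar, pbar, hD, hfpbar⟩ := P.pb_exists pr2₀ k hf₀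
    have hdwc : fbar ≫ pr2₀ = (pbar ≫ wn) ≫ pbn := by
      rw [hD.w, ← hwnk, Category.assoc]
    set dw := G.lift fbar (pbar ≫ wn) hdwc with hdw_def
    have hdw1 : dw ≫ uE = fbar := G.lift_fst _ _ _
    have hdw2 : dw ≫ tg₀ = pbar ≫ wn := G.lift_snd _ _ _
    have bigD : IsPullback pbar fbar (wn ≫ pbn) pr2₀ := by
      rw [hwnk]; exact hD.flip
    have sq22 : IsPullback pbar dw wn tg₀ := pb_cancel bigD Gflip hdw2 hdw1
    have hweqdw : P.weq dw := (P.pb_weq hfibtg₀ sq22.flip).1 hwn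
    -- (23) the weak equivalence e from PtZ to Pt₀
    have hec : (fbZ ≫ eh) ≫ q₀ = pbZ ≫ b := by
      rw [Category.assoc, hehq₀, hPtZ.w]
    set e := hPt₀.lift (fbZ ≫ eh) pbZ hec with he_def
    have he1 : e ≫ pr1₀ = fbZ ≫ eh := hPt₀.lift_fst _ _ _
    have he2 : e ≫ pr2₀ = pbZ := hPt₀.lift_snd _ _ _
    have bigZ : IsPullback fbZ pbZ (eh ≫ q₀) b := by rw [hehq₀]; exact hPtZ
    have sq23 : IsPullback fbZ e eh pr1₀ := pb_cancel bigZ hPt₀ he1 he2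
    have hweqe : P.weq e := (P.pb_weq hfeh sq23).2 hweqeh
    have htf₀e : tf₀ ≫ e = uE := by
      apply hPt₀.hom_ext
      · calc (tf₀ ≫ e) ≫ pr1₀ = tf₀ ≫ (e ≫ pr1₀) := by rw [Category.assoc]
        _ = (tf₀ ≫ fbZ) ≫ eh := by rw [he1, Category.assoc]
        _ = fbP ≫ (mi ≫ eh) := by rw [htf₀1, Category.assoc]
        _ = fbP ≫ α₀ := by rw [hmieh]
        _ = uE ≫ pr1₀ := huE1.symm
      · rw [Category.assoc, he2, htf₀2, huE2]
    -- (24) the top face commutes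
    have htt : tf₀ ≫ ti₀ = tg₀ ≫ tj₀ := by
      apply hPt₁.hom_ext
      · calc (tf₀ ≫ ti₀) ≫ fb₁ = tf₀ ≫ (ti₀ ≫ fb₁) := by rw [Category.assoc]
        _ = (tf₀ ≫ fbZ) ≫ mb := by rw [hti₀1, Category.assoc]
        _ = fbP ≫ (mi ≫ mb) := by rw [htf₀1, Category.assoc]
        _ = fbP ≫ (β ≫ ma) := by rw [hsq]
        _ = (tg₀ ≫ fbn) ≫ ma := by rw [htg₀1, Category.assoc]
        _ = tg₀ ≫ (tj₀ ≫ fb₁) := by rw [htj₀1, Category.assoc]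
        _ = (tg₀ ≫ tj₀) ≫ fb₁ := by rw [Category.assoc]
      · rw [Category.assoc, Category.assoc, hti₀2, htj₀2, htf₀2, htg₀2]
    have htop : (dw ≫ tf₀) ≫ ti₀ = pbar ≫ (wn ≫ tj₀) := by
      rw [Category.assoc, htt, ← Category.assoc, hdw2, Category.assoc]
    -- (25) the four vertical faces of the cube
    have Ff : P.IsHPB (dw ≫ tf₀) (dw ≫ fbP) fbZ mi := hpb_precomp P hweqdw facef
    have Fg : P.IsHPB pbar (dw ≫ fbP) (wn ≫ fbn) β := by
      have h0 := hpb_precomp P hweqdw faceg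
      rw [hdw2] at h0
      exact hpb_shift P hwn h0
    have Fj : P.IsHPB (wn ≫ tj₀) (wn ≫ fbn) fb₁ ma := hpb_precomp P hwn facej
    -- (26) the bottom face is a homotopy pushout
    have hmQZmb : θ ≫ mb = inlR ≫ ρ := by rw [hθmb, hmQZ_def]
    have bottom : P.IsHPO mi β mb ma :=
      ⟨hsq, QZ, inrZ, θ, hcinrZ, hwθ, hmi_def.symm, R, inlR, inrR, hR, ρ, hwρ,
        hmQZmb.symm, hma_def.symm⟩
    -- (27) the cube axiom
    have hcubeout : P.IsHPO (dw ≫ tf₀) pbar ti₀ (wn ≫ tj₀) :=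
      hcube htop bottom Ff Fg facei Fj
    obtain ⟨-, Zp, ip, σp, hcip, hwσp, hiσp, Qp, inlp, inrp, hQp, wp, hwwp, hwp1, hwp2⟩ :=
      hcubeout
    -- (28) the join of p upstairs
    set σD := σp ≫ e with hσD_def
    have hweqσD : P.weq σD := P.weq_comp hwσp hweqe
    have hipσD : ip ≫ σD = fbar := by
      rw [hσD_def, ← Category.assoc, hiσp, Category.assoc, htf₀e, hdw1]
    have hk₁c : pbar ≫ k = ip ≫ (σD ≫ pr2₀) := by
      rw [← Category.assoc, hipσD, hD.w]
    set k₁ := hQp.flip.desc k (σD ≫ pr2₀) hk₁c with hk₁_def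
    have hk₁1 : inrp ≫ k₁ = k := hQp.flip.inl_desc _ _ _
    have hk₁2 : inlp ≫ k₁ = σD ≫ pr2₀ := hQp.flip.inr_desc _ _ _
    have hjoin_up : P.IsJoin k p k₁ :=
      ⟨Pt₀, w₀, pr2₀, hw₀, hf₀, hwp₀, Dd, Zp, fbar, pbar, ip, σD, inrp, inlp, hD, hcip,
        hweqσD, hipσD, hQp.flip, hk₁1, hk₁2⟩
    -- (29) the new weak equivalence
    have hwk₁ : wp ≫ pb₁ = k₁ := by
      apply hQp.hom_ext
      · rw [← Category.assoc, hwp1, hk₁2, hσD_def, Category.assoc, Category.assoc,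
          he2, hti₀2]
      · rw [← Category.assoc, hwp2, hk₁1, Category.assoc, htj₀2, hwnk]
    exact ⟨Qp, k₁, IsIterJoin.succ hiterK hjoin_up, F₁, τ₁, q₁, hweqτ₁, hfq₁, hτ₁q₁,
      Pt₁, fb₁, pb₁, hPt₁, hfpb₁, wp, hwwp, hwk₁⟩

/-- The endgame: a weak lifting of `b` along `h''` gives a weak section of `k`. -/
lemma endgame (hc : ∀ X : C, P.CofModel X) {B Bb W F K Pt : C} {b : B ⟶ Bb}
    {h'' : W ⟶ Bb} {τn : W ⟶ F} {qn : F ⟶ Bb}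
    (hτn : P.weq τn) (hqn : P.fib qn) (hτqn : τn ≫ qn = h'')
    {fbn : Pt ⟶ F} {pbn : Pt ⟶ B} (hPt : IsPullback fbn pbn qn b) (hfpbn : P.fib pbn)
    {k : K ⟶ B} {wn : K ⟶ Pt} (hwn : P.weq wn) (hwnk : wn ≫ pbn = k)
    (hwl : P.WeakLifting b h'') : P.HasWeakSection k := by
  obtain ⟨Es, τs, qs, hτs, hqs, hτqs, s, hs⟩ := hwl
  obtain ⟨ℓ, hℓ1, -⟩ := lift_lemma P hc hτs hqn (show τs ≫ qs = τn ≫ qn by rw [hτqs, hτqn])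
  have htc : (s ≫ ℓ) ≫ qn = 𝟙 B ≫ b := by
    rw [Category.assoc, hℓ1, hs, Category.id_comp]
  exact ⟨Pt, wn, pbn, hwn, hfpbn, hwnk, hPt.lift (s ≫ ℓ) (𝟙 B) htc, hPt.lift_snd _ _ _⟩

end JProofAux

/-- In a J-category, if `E-E'-B'-B` is a weak pullback then
`secat p ≤ min (cat b) (secat p')`. -/
theorem Gsecat_le_min_of_weakPullback (J : JCat C)
    (hc : ∀ X : C, J.toPreJCat.CofModel X)
    {E B E' B' : C} (p : E ⟶ B) (p' : E' ⟶ B') (b : B ⟶ B')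
    (hw : J.toPreJCat.IsWeakPullback p p' b) :
    J.toPreJCat.Gsecat p ≤ min (J.toPreJCat.catMor b) (J.toPreJCat.Gsecat p') := by
  set P := J.toPreJCat with hP_def
  -- unpack the weak pullback hypothesis
  obtain ⟨Xw, τa, qa, hτa, hqa, hτqa, x, hhpb⟩ := hw
  obtain ⟨hxc, E₀, τ₀h, q₀, hτ₀h, hq₀, hτ₀q, Pt₀, pr1₀, pr2₀, hPt₀, w₀, hw₀, hw₀1, hw₀2⟩ :=
    hhpb
  have hτ₀ : P.weq (τa ≫ τ₀h) := P.weq_comp hτa hτ₀h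
  have hτq₀ : (τa ≫ τ₀h) ≫ q₀ = p' := by rw [Category.assoc, hτ₀q, hτqa]
  have hf₀ : P.fib pr2₀ := JProofAux.fib_of_isPullback P hPt₀ hq₀
  have key : ∀ (m : ℕ) {W : C} (h'' : W ⟶ B'), P.IsIterJoin p' m h'' →
      P.WeakLifting b h'' →
      ∃ (K : C) (k : K ⟶ B), P.IsIterJoin p m k ∧ P.HasWeakSection k := by
    intro m W h'' hiter hwl
    obtain ⟨K, k, hiterp, F, τn, qn, hτn, hqn, hτqn, Pt, fbn, pbn, hPt, hfpbn,
      wn, hwn, hwnk⟩ :=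
      JProofAux.star P hc (fun h1 h2 h3 h4 h5 h6 => J.cube h1 h2 h3 h4 h5 h6)
        p p' b hq₀ hτ₀ hτq₀ hPt₀ hf₀ hw₀ hw₀2 hiter
    exact ⟨K, k, hiterp,
      JProofAux.endgame P hc hτn hqn hτqn hPt hfpbn hwn hwnk hwl⟩
  apply le_min
  · -- Gsecat p ≤ catMor b
    refine le_sInf ?_
    rintro n ⟨m, rfl, G, g, hganea, hwl⟩
    obtain ⟨X₂, h₂, d, hit₂, hd⟩ := JProofAux.join_mono P hc
      (0 : (0 : C) ⟶ E') (zero_comp ..) hganea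
    have hwl₂ : P.WeakLifting b h₂ := JProofAux.weakLifting_of_map P hc d hd hwl
    obtain ⟨K, k, hiterp, hsec⟩ := key m h₂ hit₂ hwl₂
    exact sInf_le ⟨m, rfl, K, k, hiterp, hsec⟩
  · -- Gsecat p ≤ Gsecat p'
    refine le_sInf ?_
    rintro n ⟨m, rfl, Xj, hj, hitj, hws⟩
    obtain ⟨Es, τs, qs, hτs, hqs, hτqs, s', hs'⟩ := hws
    have hwlb : P.WeakLifting b hj :=
      ⟨Es, τs, qs, hτs, hqs, hτqs, b ≫ s', by rw [Category.assoc, hs', Category.comp_id]⟩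
    obtain ⟨K, k, hiterp, hsec⟩ := key m hj hitj hwlb
    exact sInf_le ⟨m, rfl, K, k, hiterp, hsec⟩
end
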